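/- arXiv:2111.12387 — 6 statements merged into one kernel-verified Lean document; each statement's English description precedes it below -/
import Mathlib

section
/- Let D = (V, A) be a directed acyclic graph. If the acyclic reorientation poset AR(D) is a lattice, then the transitive reduction of D is a forest. -/
def ArcRel {V : Type*} (E : Set (V × V)) : V → V → Prop := fun x y => (x, y) ∈ E

/-- `E` has no directed cycle. -/
def AcyclicArcs {V : Type*} (E : Set (V × V)) : Prop :=
  ∀ v : V, ¬ Relation.TransGen (ArcRel E) v v

/-- `A` is the arc set of a directed acyclic graph: arcs join distinct vertices,
at most one direction between two vertices, and no directed cycle. -/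
def IsDAG {V : Type*} (A : Set (V × V)) : Prop :=
  (∀ a ∈ A, a.1 ≠ a.2) ∧ (∀ a ∈ A, Prod.swap a ∉ A) ∧ AcyclicArcs A

/-- Arc set of the reorientation of `A` where exactly the arcs of `B` are reversed. -/
def reorient {V : Type*} (A B : Set (V × V)) : Set (V × V) :=
  (A \ B) ∪ (Prod.swap '' B)

/-- `B` encodes an acyclic reorientation of `A`. -/
def ARmem {V : Type*} (A B : Set (V × V)) : Prop :=
  B ⊆ A ∧ AcyclicArcs (reorient A B)

/-- The acyclic reorientation poset of `A`, ordered by inclusion of reversed sets. -/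
abbrev ARP {V : Type*} (A : Set (V × V)) := {B : Set (V × V) // ARmem A B}

/-- Transitive reduction: delete every arc whose endpoints are joined by a
directed path of length at least 2. -/
def transRed {V : Type*} (E : Set (V × V)) : Set (V × V) :=
  {a ∈ E | ¬ ∃ w : V, ArcRel E a.1 w ∧ Relation.TransGen (ArcRel E) w a.2}

/-- Underlying undirected graph of an arc set. -/
def undirectedGraph {V : Type*} (E : Set (V × V)) : SimpleGraph V :=
  SimpleGraph.fromRel (fun x y => (x, y) ∈ E)

/-- A directed graph is a forest if its underlying undirected graph has no cycle. -/
def IsForestArcs {V : Type*} (E : Set (V × V)) : Prop :=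
  (undirectedGraph E).IsAcyclic

open scoped Fin.CommRing

lemma tg_of_chain {V : Type*} (E : Set (V × V)) (w : ℕ → V) :
    ∀ n, 0 < n → (∀ t, t < n → ArcRel E (w t) (w (t + 1))) →
      Relation.TransGen (ArcRel E) (w 0) (w n) := by
  intro n
  induction n with
  | zero => omega
  | succ m ih =>
    intro _ hsteps
    rcases Nat.eq_zero_or_pos m with rfl | hm
    · exact .single (hsteps 0 (by omega))
    · exact (ih hm (fun t ht => hsteps t (by omega))).tail (hsteps m (by omega))


lemma empty_ARmem {V : Type*} {A : Set (V × V)} (hA : IsDAG A) : ARmem A ∅ := by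
  refine ⟨Set.empty_subset _, ?_⟩
  have : reorient A ∅ = A := by simp [reorient]
  rw [this]; exact hA.2.2


lemma singleton_ARmem {V : Type*} {A : Set (V × V)} (hA : IsDAG A) {f : V × V}
    (hf : f ∈ transRed A) : ARmem A {f} := by
  have hfA : f ∈ A := hf.1
  refine ⟨Set.singleton_subset_iff.mpr hfA, ?_⟩
  intro x htg
  have key : ∀ {a b}, Relation.TransGen (ArcRel (reorient A {f})) a b →
      Relation.TransGen (ArcRel (A \ {f})) a b ∨
      (Relation.ReflTransGen (ArcRel (A \ {f})) a f.2 ∧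
        Relation.ReflTransGen (ArcRel (A \ {f})) f.1 b) := by
    intro a b h
    induction h with
    | @single y hstep =>
      rcases hstep with h1 | h2
      · exact Or.inl (.single h1)
      · rw [Set.image_singleton] at h2
        obtain ⟨h3a, h3b⟩ := Prod.ext_iff.mp (Set.mem_singleton_iff.mp h2)
        simp only [Prod.fst, Prod.snd, Prod.fst_swap, Prod.snd_swap] at h3a h3b
        exact Or.inr ⟨h3a ▸ .refl, h3b ▸ .refl⟩
    | @tail b' c' hab hbc ih =>
      rcases hbc with h1 | h2
      · rcases ih with h | ⟨hh1, hh2⟩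
        · exact Or.inl (h.tail h1)
        · exact Or.inr ⟨hh1, hh2.tail h1⟩
      · rw [Set.image_singleton] at h2
        obtain ⟨h3a, h3b⟩ := Prod.ext_iff.mp (Set.mem_singleton_iff.mp h2)
        simp only [Prod.fst, Prod.snd, Prod.fst_swap, Prod.snd_swap] at h3a h3b
        rcases ih with h | ⟨hh1, hh2⟩
        · exact Or.inr ⟨h3a ▸ h.to_reflTransGen, h3b ▸ .refl⟩
        · exact Or.inr ⟨hh1, h3b ▸ .refl⟩
  have hne : f.1 ≠ f.2 := hA.1 f hfA
  rcases key htg with h | ⟨h1, h2⟩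
  · exact hA.2.2 x (Relation.TransGen.mono (fun a b hab => hab.1) _ _ h)
  · have h3 : Relation.ReflTransGen (ArcRel (A \ {f})) f.1 f.2 := h2.trans h1
    rcases h3.cases_head with heq | ⟨c, hc1, hc2⟩
    · exact hne heq
    · have hcne : c ≠ f.2 := by
        intro h0
        rw [h0] at hc1
        exact hc1.2 (by simp [ArcRel])
      rcases hc2.cases_head with heq2 | ⟨d, hd1, hd2⟩
      · exact hcne heq2
      · have htg2 : Relation.TransGen (ArcRel (A \ {f})) c f.2 :=
          Relation.TransGen.head' hd1 hd2
        exact hf.2 ⟨c, hc1.1, Relation.TransGen.mono (fun a b hab => hab.1) _ _ htg2⟩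


lemma order_ARmem {V : Type*} {A : Set (V × V)} (hA : IsDAG A) (s₀ : V → V → Prop)
    (hs : ∀ x, ¬ Relation.TransGen s₀ x x) :
    ∃ B : Set (V × V), ARmem A B ∧ (∀ a ∈ A, s₀ a.2 a.1 → a ∈ B) ∧
      (∀ a ∈ A, s₀ a.1 a.2 → a ∉ B) := by
  classical
  letI po : IsPartialOrder V (Relation.ReflTransGen s₀) :=
    { refl := fun a => .refl
      trans := fun a b c hab hbc => hab.trans hbc
      antisymm := by
        intro a b hab hba
        by_contra hne
        rcases hab.cases_head with heq | ⟨c, hc1, hc2⟩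
        · exact hne heq
        · exact hs a (Relation.TransGen.head' hc1 (hc2.trans hba)) }
  obtain ⟨s, hlin, hrs⟩ := extend_partialOrder (Relation.ReflTransGen s₀)
  have htot : ∀ a b, s a b ∨ s b a := hlin.2.1
  have hanti : ∀ a b, s a b → s b a → a = b := fun a b => hlin.1.2.1 a b
  have htrans : ∀ a b c, s a b → s b c → s a c := fun a b c => hlin.1.1.2.1 a b c
  set lt' : V → V → Prop := fun x y => s x y ∧ x ≠ y with hlt'
  have hlt'trans : Transitive lt' := by
    rintro a b c ⟨h1, h2⟩ ⟨h3, h4⟩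
    refine ⟨htrans _ _ _ h1 h3, ?_⟩
    rintro rfl
    exact h2 (hanti _ _ h1 h3)
  have hs0lt : ∀ a b, s₀ a b → lt' a b := by
    intro a b h
    refine ⟨hrs _ _ (.single h), ?_⟩
    rintro rfl
    exact hs a (.single h)
  refine ⟨{a ∈ A | lt' a.2 a.1}, ⟨fun a ha => ha.1, ?_⟩, ?_, ?_⟩
  · intro x htg
    have hsub : ∀ a b, ArcRel (reorient A {a ∈ A | lt' a.2 a.1}) a b → lt' a b := by
      rintro a b (⟨hab, hnb⟩ | ⟨⟨c1, c2⟩, hc, hcab⟩)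
      · have hne : a ≠ b := hA.1 (a, b) hab
        rcases htot a b with h | h
        · exact ⟨h, hne⟩
        · exact absurd ⟨hab, h, hne.symm⟩ hnb
      · obtain ⟨e1, e2⟩ := Prod.ext_iff.mp hcab
        have := hc.2
        simp only [Prod.snd, Prod.fst] at e1 e2 this
        rw [← e1, ← e2]
        exact this
    have := Relation.TransGen.mono hsub _ _ htg
    rw [@Relation.transGen_eq_self _ lt' ⟨hlt'trans⟩] at this
    exact this.2 rfl
  · intro a ha h0
    exact ⟨ha, hs0lt _ _ h0⟩
  · rintro a ha h0 ⟨-, h1, h2⟩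
    exact h2 (hanti _ _ h1 (hs0lt _ _ h0).1)


lemma finset_lub {α : Type*} [Preorder α] (hl : ∀ x y : α, ∃ z, IsLUB {x, y} z)
    (bot : α) (hbot : ∀ t, bot ≤ t) {ι : Type*} [DecidableEq ι] (x : ι → α) (S : Finset ι) :
    ∃ z, (∀ i ∈ S, x i ≤ z) ∧ ∀ w, (∀ i ∈ S, x i ≤ w) → z ≤ w := by
  induction S using Finset.induction_on with
  | empty => exact ⟨bot, by simp, fun w _ => hbot w⟩
  | @insert a S ha ih =>
    obtain ⟨z', hz1, hz2⟩ := ih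
    obtain ⟨z, hz⟩ := hl (x a) z'
    have hxa : x a ≤ z := hz.1 (by simp)
    have hz'z : z' ≤ z := hz.1 (by simp)
    refine ⟨z, ?_, ?_⟩
    · intro i hi
      rcases Finset.mem_insert.mp hi with rfl | hi
      · exact hxa
      · exact (hz1 i hi).trans hz'z
    · intro w hw
      apply hz.2
      rintro t (rfl | rfl)
      · exact hw a (Finset.mem_insert_self a S)
      · exact hz2 w (fun i hi => hw i (Finset.mem_insert_of_mem hi))

lemma avoid_lemma {V : Type*} {A : Set (V × V)} (hA : IsDAG A) {K : ℕ} [NeZero K]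
    (hK : 1 < K) (v : Fin K → V) (hinj : Function.Injective v)
    (j j'' : Fin K) (hne : j ≠ j'') :
    ∃ B : Set (V × V), ARmem A B ∧
      (∀ i : Fin K, i ≠ j'' → (v i, v (i + 1)) ∈ A → (v i, v (i + 1)) ∈ B) ∧
      (v (j + 1), v j) ∉ B := by
  classical
  set s₀ : V → V → Prop := fun a b => ∃ i : Fin K, i ≠ j'' ∧ a = v (i + 1) ∧ b = v i
    with hs₀
  set φ : V → ℕ := fun xx =>
    if h : ∃ i : Fin K, v i = xx then (h.choose - (j'' + 1)).val else 0 with hφ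
  have hvone : ((1 : Fin K) : ℕ) = 1 := by
    rw [Fin.val_one']; exact Nat.mod_eq_of_lt hK
  have hdec : ∀ a b, s₀ a b → φ b < φ a := by
    rintro a b ⟨i, hij, rfl, rfl⟩
    have hb : ∃ i' : Fin K, v i' = v i := ⟨i, rfl⟩
    have ha : ∃ i' : Fin K, v i' = v (i + 1) := ⟨i + 1, rfl⟩
    have hbch : hb.choose = i := hinj hb.choose_spec
    have hach : ha.choose = i + 1 := hinj ha.choose_spec
    show φ (v i) < φ (v (i + 1))
    rw [hφ]
    simp only [dif_pos hb, dif_pos ha]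
    rw [hbch, hach]
    have e1 : i + 1 - (j'' + 1) = i - j'' := by ring
    have e2 : i - (j'' + 1) = i - j'' - 1 := by ring
    rw [e1, e2]
    set d := i - j'' with hd
    have hd0 : d ≠ 0 := by rw [hd]; exact sub_ne_zero.mpr hij
    have hdval : 1 ≤ (d : ℕ) := by
      rcases Nat.eq_zero_or_pos (d : ℕ) with h0 | h
      · exact absurd (Fin.ext (by simp [h0])) hd0
      · exact h
    have hlt : (d : ℕ) < K := d.isLt
    have hsub : ((d - 1 : Fin K) : ℕ) = (d : ℕ) - 1 := by
      rw [Fin.sub_def]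
      show ((K - ((1 : Fin K) : ℕ)) + (d : ℕ)) % K = (d : ℕ) - 1
      rw [hvone, show K - 1 + (d : ℕ) = ((d : ℕ) - 1) + K from by omega,
        Nat.add_mod_right]
      exact Nat.mod_eq_of_lt (by omega)
    rw [hsub]
    omega
  have hs : ∀ xx, ¬ Relation.TransGen s₀ xx xx := by
    intro xx h
    have key : ∀ {a b}, Relation.TransGen s₀ a b → φ b < φ a := by
      intro a b h
      induction h with
      | single h1 => exact hdec _ _ h1
      | tail h1 h2 ih => exact (hdec _ _ h2).trans ih
    exact lt_irrefl _ (key h)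
  obtain ⟨B, hB, hBin, hBout⟩ := order_ARmem hA s₀ hs
  refine ⟨B, hB, ?_, ?_⟩
  · intro i hij hiA
    exact hBin _ hiA ⟨i, hij, rfl, rfl⟩
  · intro hmem
    exact hBout _ (hB.1 hmem) ⟨j, hne, rfl, rfl⟩ hmem

lemma exists_cycle_fun {V : Type*} (R : Set (V × V)) (h : ¬ IsForestArcs R) :
    ∃ (k : ℕ) (v : Fin (k + 3) → V), Function.Injective v ∧
      ∀ i : Fin (k + 3), (v i, v (i + 1)) ∈ R ∨ (v (i + 1), v i) ∈ R := by
  unfold IsForestArcs SimpleGraph.IsAcyclic at h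
  push_neg at h
  obtain ⟨u, p, hp⟩ := h
  set L := p.support.tail with hL
  have hlen0 : p.support.length = p.length + 1 := p.length_support
  have hlen : L.length = p.length := by rw [hL, List.length_tail, hlen0]; omega
  have hk3 : 3 ≤ L.length := by rw [hlen]; exact hp.three_le_length
  have hnd : L.Nodup := hp.2
  have hchain : List.IsChain (undirectedGraph R).Adj p.support := p.isChain_adj_support
  have hsupp : p.support = u :: L := p.support_eq_cons
  have hLne : L ≠ [] := by
    intro h0; rw [h0] at hk3; simp at hk3
  set n := L.length with hn
  have hcast : (n - 3) + 3 = n := by omega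
  have hmod : ∀ m : ℕ, m % (n - 3 + 3) = m % n := fun m => by rw [hcast]
  have hchain' : ∀ (t : ℕ) (ht : t < n),
      (undirectedGraph R).Adj ((u :: L).get ⟨t, by simp; omega⟩) ((u :: L).get ⟨t+1, by simp; omega⟩) := by
    intro t ht
    have := List.isChain_iff_getElem.mp (hsupp ▸ hchain) t (by simp; omega)
    convert this using 2 <;> simp
  refine ⟨n - 3, (fun i => L.get (Fin.cast hcast i)), ?_, ?_⟩
  · intro a b hab
    have := List.nodup_iff_injective_get.mp hnd hab
    exact Fin.cast_injective hcast this
  · intro i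
    have hival : (Fin.cast hcast i : Fin n).val = i.val := rfl
    have hival2 : ((Fin.cast hcast (i+1)) : Fin n).val = (i.val + 1) % n := by
      show ((i+1 : Fin (n-3+3))).val = (i.val + 1) % n
      rw [Fin.add_def, Fin.val_one', Nat.one_mod_eq_one.mpr (by omega)]
      exact hmod _
    by_cases hil : i.val + 1 < n
    · have hadj := hchain' (i.val + 1) (by omega)
      have e1 : (u :: L).get ⟨i.val + 1, by simp; omega⟩ = L.get (Fin.cast hcast i) := by
        simp [List.get_cons_succ]
      have e2 : (u :: L).get ⟨i.val + 1 + 1, by simp; omega⟩ = L.get (Fin.cast hcast (i+1)) := by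
        have hx : (Fin.cast hcast (i+1) : Fin n).val = i.val + 1 := by
          rw [hival2, Nat.mod_eq_of_lt hil]
        simp only [List.get_cons_succ]
        congr 1
        exact (Fin.ext hx.symm)
      rw [e1, e2] at hadj
      rw [undirectedGraph, SimpleGraph.fromRel_adj] at hadj
      exact hadj.2
    · have hieq : i.val = n - 1 := by have := i.isLt; omega
      have hadj := hchain' 0 (by omega)
      have hgl : L.getLast hLne = u := by
        show p.support.tail.getLast _ = u
        rw [List.getLast_tail]
        exact p.getLast_support
      have e1 : (u :: L).get ⟨0, by simp⟩ = L.get (Fin.cast hcast i) := by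
        show u = _
        rw [List.getLast_eq_getElem] at hgl
        rw [List.get_eq_getElem, ← hgl]
        congr 1
        rw [hival, hieq]
      have e2 : (u :: L).get ⟨0 + 1, by simp; omega⟩ = L.get (Fin.cast hcast (i+1)) := by
        have hz : ((i:ℕ) + 1) % n = 0 := by
          rw [hieq, Nat.sub_add_cancel (by omega), Nat.mod_self]
        simp only [List.get_cons_succ]
        congr 1
        refine Fin.ext ?_
        rw [hival2]
        exact hz.symm
      rw [e1, e2] at hadj
      rw [undirectedGraph, SimpleGraph.fromRel_adj] at hadj
      exact hadj.2

lemma no_cycle_fun {V : Type*} {E : Set (V × V)} (hE : AcyclicArcs E) {K : ℕ} [NeZero K]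
    (v : Fin K → V) (h : ∀ i : Fin K, ArcRel E (v i) (v (i + 1))) : False := by
  have htg := tg_of_chain E (fun t => v (t : Fin K)) K (NeZero.pos K) ?_
  · simp only [Nat.cast_zero, Fin.natCast_self] at htg
    exact hE (v 0) htg
  · intro t _
    show ArcRel E (v (t : Fin K)) (v ((t + 1 : ℕ) : Fin K))
    have e : ((t + 1 : ℕ) : Fin K) = (t : Fin K) + 1 := by push_cast; ring
    rw [e]
    exact h _


/-- If the acyclic reorientation poset is a lattice, then the
transitive reduction of `D` is a forest. -/
theorem stmt_1 {V : Type*} [Fintype V] (A : Set (V × V)) (hA : IsDAG A)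
    (hlat : (∀ x y : ARP A, ∃ z : ARP A, IsLUB {x, y} z) ∧
      (∀ x y : ARP A, ∃ z : ARP A, IsGLB {x, y} z)) :
    IsForestArcs (transRed A) := by
  classical
  by_contra hforest
  obtain ⟨k, v, hinj, hadj⟩ := exists_cycle_fun (transRed A) hforest
  have hRA : transRed A ⊆ A := fun a ha => ha.1
  set fwd : Fin (k + 3) → Prop := fun i => (v i, v (i + 1)) ∈ transRed A with hfwd
  have hback : ∀ i, ¬ fwd i → (v (i + 1), v i) ∈ transRed A :=
    fun i h => (hadj i).resolve_left h
  have hvone : ((1 : Fin (k + 3)) : ℕ) = 1 := by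
    rw [Fin.val_one']; exact Nat.mod_eq_of_lt (by omega)
  have hsucc_ne : ∀ i : Fin (k + 3), i + 1 ≠ i := by
    intro i h
    have h0 : (1 : Fin (k + 3)) = 0 := by
      calc (1 : Fin (k + 3)) = i + 1 - i := by ring
      _ = i - i := by rw [h]
      _ = 0 := by ring
    have := congrArg Fin.val h0
    rw [hvone] at this
    simp at this
  -- there are at least two non-forward positions
  have hGex : ∃ j, ¬ fwd j := by
    by_contra hall
    push_neg at hall
    exact no_cycle_fun hA.2.2 v (fun i => hRA (hall i))
  have hGsnd : ∀ j, ¬ fwd j → ∃ j', j' ≠ j ∧ ¬ fwd j' := by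
    intro j hj
    by_contra hall
    push_neg at hall
    have hjR : (v (j + 1), v j) ∈ transRed A := hback j hj
    apply hjR.2
    refine ⟨v (j + 1 + 1), hRA (hall (j + 1) (hsucc_ne j)), ?_⟩
    have htg := tg_of_chain A (fun t => v (j + 1 + 1 + (t : Fin (k + 3)))) (k + 1)
      (by omega) ?_
    · have eK : j + 1 + 1 + ((k + 1 : ℕ) : Fin (k + 3)) = j := by
        have e : ((k + 1 : ℕ) : Fin (k + 3)) + 2 = 0 := by
          have h2 : ((2 : ℕ) : Fin (k + 3)) = (2 : Fin (k + 3)) := by norm_cast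
          rw [← h2, ← Nat.cast_add]
          show ((k + 3 : ℕ) : Fin (k + 3)) = 0
          exact Fin.natCast_self _
        calc j + 1 + 1 + ((k + 1 : ℕ) : Fin (k + 3))
            = j + (((k + 1 : ℕ) : Fin (k + 3)) + 2) := by ring
        _ = j + 0 := by rw [e]
        _ = j := add_zero j
      have htg' : Relation.TransGen (ArcRel A) (v (j + 1 + 1)) (v j) := by
        simpa only [Nat.cast_zero, add_zero, eK] using htg
      exact htg'
    · intro t ht
      have hposne : j + 1 + 1 + (t : Fin (k + 3)) ≠ j := by
        intro hpos
        have h0 : (1 : Fin (k + 3)) + 1 + (t : Fin (k + 3)) = 0 := by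
          calc (1 : Fin (k + 3)) + 1 + (t : Fin (k + 3))
              = (j + 1 + 1 + (t : Fin (k + 3))) - j := by ring
          _ = j - j := by rw [hpos]
          _ = 0 := by ring
        have h1 : (1 : Fin (k + 3)) + 1 + (t : Fin (k + 3)) = ((t + 2 : ℕ) : Fin (k + 3)) := by
          push_cast; ring
        rw [h1] at h0
        have h2 := congrArg Fin.val h0
        rw [Fin.val_cast_of_lt (by omega : t + 2 < k + 3)] at h2
        simp at h2
      have hfp : fwd (j + 1 + 1 + (t : Fin (k + 3))) := hall _ hposne
      have hmem : (v (j + 1 + 1 + (t : Fin (k + 3))),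
          v (j + 1 + 1 + (t : Fin (k + 3)) + 1)) ∈ A := hRA hfp
      have e : j + 1 + 1 + ((t + 1 : ℕ) : Fin (k + 3)) = j + 1 + 1 + (t : Fin (k + 3)) + 1 := by
        push_cast; ring
      show ArcRel A _ (v (j + 1 + 1 + ((t + 1 : ℕ) : Fin (k + 3))))
      rw [e]
      exact hmem
  obtain ⟨j1, hj1⟩ := hGex
  obtain ⟨j2, hne12, hj2⟩ := hGsnd j1 hj1
  -- the joinands
  set x : Fin (k + 3) → ARP A := fun i =>
    if h : fwd i then ⟨{(v i, v (i + 1))}, singleton_ARmem hA h⟩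
    else ⟨∅, empty_ARmem hA⟩ with hx
  obtain ⟨z, hz1, hz2⟩ := finset_lub hlat.1 ⟨∅, empty_ARmem hA⟩
    (fun t => (Set.empty_subset t.val : (∅ : Set (V × V)) ≤ t.val)) x Finset.univ
  have hz1' : ∀ i, x i ≤ z := fun i => hz1 i (Finset.mem_univ i)
  have hFz : ∀ i, fwd i → (v i, v (i + 1)) ∈ z.val := by
    intro i h
    have hxi : x i = ⟨{(v i, v (i + 1))}, singleton_ARmem hA h⟩ := by
      simp only [hx]; rw [dif_pos h]
    have hle := hz1' i
    rw [hxi] at hle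
    have h2 : ({(v i, v (i + 1))} : Set (V × V)) ⊆ z.val := hle
    exact h2 rfl
  have hout : ∀ j, ¬ fwd j → (v (j + 1), v j) ∉ z.val := by
    intro j hj
    have hj'' : ∃ j'', j ≠ j'' ∧ ¬ fwd j'' := by
      by_cases h : j = j1
      · exact ⟨j2, by rw [h]; exact hne12.symm, hj2⟩
      · exact ⟨j1, h, hj1⟩
    obtain ⟨j'', hnej, hj''G⟩ := hj''
    obtain ⟨B, hB, hBin, hBout⟩ := avoid_lemma hA (by omega : 1 < k + 3) v hinj j j'' hnej
    have hzB : z ≤ ⟨B, hB⟩ := by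
      apply hz2
      intro i _
      by_cases h : fwd i
      · have hxi : x i = ⟨{(v i, v (i + 1))}, singleton_ARmem hA h⟩ := by
          simp only [hx]; rw [dif_pos h]
        rw [hxi]
        show ({(v i, v (i + 1))} : Set (V × V)) ⊆ B
        intro a ha
        rw [Set.mem_singleton_iff] at ha
        rw [ha]
        exact hBin i (fun h0 => hj''G (h0 ▸ h)) (hRA h)
      · have hxi : x i = ⟨∅, empty_ARmem hA⟩ := by
          simp only [hx]; rw [dif_neg h]
        rw [hxi]
        show (∅ : Set (V × V)) ⊆ B
        exact Set.empty_subset B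
    intro hmem
    exact hBout (hzB hmem)
  -- final contradiction: directed cycle in the reorientation by z
  apply no_cycle_fun z.2.2 (fun i : Fin (k + 3) => v (-i))
  intro i
  show ArcRel (reorient A z.val) (v (-i)) (v (-(i + 1)))
  set p := -i - 1 with hp
  have e2 : -(i + 1) = p := by rw [hp]; ring
  have e1 : -i = p + 1 := by rw [hp]; ring
  rw [e2, e1]
  by_cases hf : fwd p
  · exact Or.inr ⟨(v p, v (p + 1)), hFz p hf, rfl⟩
  · exact Or.inl ⟨hRA (hback p hf), hout p hf⟩
end

section
/- Let D = (V, A) be a vertebrate directed acyclic graph. A subset B ⊆ A is biclosed if and only if the reoriented graph E_B is acyclic, i.e., B ∈ AR(D). -/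
def inducedArcs {V : Type*} (A : Set (V × V)) (U : Set V) : Set (V × V) :=
  {a ∈ A | a.1 ∈ U ∧ a.2 ∈ U}

/-- The transitive reduction of any induced subgraph is a forest. -/
def Vertebrate {V : Type*} (A : Set (V × V)) : Prop :=
  ∀ U : Set V, IsForestArcs (transRed (inducedArcs A U))

/-- `B` is closed in `A`: every arc of `A` whose endpoints are joined by a
directed path all of whose arcs belong to `B` itself belongs to `B`. -/
def ClosedIn {V : Type*} (A B : Set (V × V)) : Prop :=
  ∀ a ∈ A, Relation.TransGen (ArcRel B) a.1 a.2 → a ∈ B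

section Aux

open Relation

variable {V : Type*}

/-- Arcs of a reorientation have distinct endpoints. -/
private lemma reorient_ne {A B : Set (V × V)} (hA : IsDAG A) (hB : B ⊆ A) :
    ∀ x y : V, (x, y) ∈ reorient A B → x ≠ y := by
  rintro x y (⟨h, -⟩ | ⟨b, hb, hs⟩)
  · exact hA.1 _ h
  · have := hA.1 _ (hB hb)
    have h1 : b.2 = x := congrArg Prod.fst hs
    have h2 : b.1 = y := congrArg Prod.snd hs
    intro hxy
    exact this (by rw [h2, ← hxy, ← h1])

/-- A reorientation never contains both directions of an arc. -/
private lemma reorient_asymm {A B : Set (V × V)} (hA : IsDAG A) (hB : B ⊆ A) :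
    ∀ x y : V, (x, y) ∈ reorient A B → (y, x) ∈ reorient A B → False := by
  rintro x y (⟨h1, h1'⟩ | ⟨b, hb, hs⟩) (⟨h2, h2'⟩ | ⟨c, hc, hcs⟩)
  · exact hA.2.1 (x, y) h1 h2
  · have : c = (x, y) := by
      have := congrArg Prod.swap hcs
      simpa using this
    exact h1' (this ▸ hc)
  · have : b = (y, x) := by
      have := congrArg Prod.swap hs
      simpa using this
    exact h2' (this ▸ hb)
  · have hbe : b = (y, x) := by
      have := congrArg Prod.swap hs
      simpa using this
    have hce : c = (x, y) := by
      have := congrArg Prod.swap hcs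
      simpa using this
    have h1 : (x, y) ∈ A := hB (hce ▸ hc)
    have h2 : (y, x) ∈ A := hB (hbe ▸ hb)
    exact hA.2.1 (x, y) h1 h2

/-- Extract a finite walk from a `TransGen` proof. -/
private lemma transGen_toWalk {r : V → V → Prop} {a b : V} (h : TransGen r a b) :
    ∃ (n : ℕ) (f : ℕ → V), 1 ≤ n ∧ f 0 = a ∧ f n = b ∧ ∀ i < n, r (f i) (f (i + 1)) := by
  induction h with
  | @single c hab =>
      refine ⟨1, fun m => if m = 0 then a else c, le_refl 1, by simp, by simp, ?_⟩
      intro i hi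
      interval_cases i
      simpa using hab
  | @tail c d hac hcd ih =>
      obtain ⟨n, f, hn, hf0, hfn, hstep⟩ := ih
      refine ⟨n + 1, fun m => if m ≤ n then f m else d, by omega, ?_, ?_, ?_⟩
      · simp [Nat.zero_le, hf0]
      · simp
      · intro i hi
        dsimp only
        by_cases h1 : i + 1 ≤ n
        · rw [if_pos (by omega), if_pos h1]
          exact hstep i (by omega)
        · have hieq : i = n := by omega
          rw [if_pos (by omega), if_neg h1, hieq, hfn]
          exact hcd

/-- Splitting a `TransGen` of a union of two relations which cannot follow one
another into a homogeneous one. -/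
private lemma transGen_union_split {r1 r2 : V → V → Prop}
    (h12 : ∀ x y z, r1 x y → r2 y z → False)
    (h21 : ∀ x y z, r2 x y → r1 y z → False)
    {u v : V} (h : TransGen (fun a b => r1 a b ∨ r2 a b) u v) :
    TransGen r1 u v ∨ TransGen r2 u v := by
  induction h with
  | single hab => rcases hab with h | h
                  exacts [Or.inl (TransGen.single h), Or.inr (TransGen.single h)]
  | @tail c d hac hcd ih =>
      rcases hcd with h | h
      · rcases ih with ih | ih
        · exact Or.inl (ih.tail h)
        · obtain ⟨y, -, hy⟩ := TransGen.tail'_iff.mp ih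
          exact (h21 y c d hy h).elim
      · rcases ih with ih | ih
        · obtain ⟨y, -, hy⟩ := TransGen.tail'_iff.mp ih
          exact (h12 y c d hy h).elim
        · exact Or.inr (ih.tail h)

end Aux

/-- For a vertebrate directed acyclic graph, a subset `B ⊆ A`
is biclosed if and only if the reorientation `E_B` is acyclic. -/
theorem stmt_2 {V : Type*} [Fintype V] (A : Set (V × V)) (hA : IsDAG A)
    (hV : Vertebrate A) (B : Set (V × V)) (hB : B ⊆ A) :
    (ClosedIn A B ∧ ClosedIn A (A \ B)) ↔ ARmem A B := by
  classical
  constructor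
  · rintro ⟨hcl, hcoc⟩
    refine ⟨hB, ?_⟩
    intro v hv
    -- a closed walk exists
    obtain ⟨n0, f0, hn0, hf0a, hf0b, hstep0⟩ := transGen_toWalk hv
    have hex : ∃ n : ℕ, 1 ≤ n ∧ ∃ f : ℕ → V, f n = f 0 ∧
        ∀ i < n, (f i, f (i + 1)) ∈ reorient A B :=
      ⟨n0, hn0, f0, by rw [hf0b, hf0a], hstep0⟩
    set n := Nat.find hex with hndef
    obtain ⟨hn1, f, hfc, hstep⟩ := Nat.find_spec hex
    rw [← hndef] at hn1 hfc hstep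
    have hmin : ∀ m, m < n → ¬ (1 ≤ m ∧ ∃ g : ℕ → V, g m = g 0 ∧
        ∀ i < m, (g i, g (i + 1)) ∈ reorient A B) := fun m hm => Nat.find_min hex hm
    -- n ≥ 3
    have hne := reorient_ne hA hB
    have hasym := reorient_asymm hA hB
    have hn3 : 3 ≤ n := by
      by_contra hc
      push_neg at hc
      have : n = 1 ∨ n = 2 := by omega
      rcases this with h | h
      · have h01 := hstep 0 (by omega)
        rw [h] at hfc
        rw [hfc] at h01
        exact hne _ _ h01 rfl
      · have h01 := hstep 0 (by omega)
        have h12 := hstep 1 (by omega)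
        rw [h] at hfc
        rw [hfc] at h12
        exact hasym _ _ h01 h12
    -- steps mod n
    have hstep' : ∀ k, k < n → (f k, f ((k + 1) % n)) ∈ reorient A B := by
      intro k hk
      rcases eq_or_lt_of_le (Nat.succ_le_of_lt hk) with h | h
      · have h' : k + 1 = n := h
        rw [h', Nat.mod_self, ← hfc, ← h']
        exact hstep k hk
      · have h' : k + 1 < n := h
        rw [Nat.mod_eq_of_lt h']
        exact hstep k hk
    have hstepm : ∀ k, (f (k % n), f ((k + 1) % n)) ∈ reorient A B := by
      intro k
      have h1 : (k + 1) % n = (k % n + 1) % n := by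
        rw [Nat.add_mod k 1 n, Nat.mod_eq_of_lt (show (1:ℕ) < n by omega)]
      rw [h1]
      exact hstep' (k % n) (Nat.mod_lt _ (by omega))
    -- injectivity on [0, n)
    have hinj_aux : ∀ i j, i < j → j < n → f i = f j → False := by
      intro i j hij hjn hfe
      have hm1 : 1 ≤ n - (j - i) := by omega
      have hmn : n - (j - i) < n := by omega
      refine hmin _ hmn ⟨hm1, fun k => if k ≤ i then f k else f (k + (j - i)), ?_, ?_⟩
      · dsimp only
        rw [if_neg (show ¬ n - (j - i) ≤ i by omega), if_pos (Nat.zero_le i)]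
        have h1 : n - (j - i) + (j - i) = n := by omega
        rw [h1, hfc]
      · intro k hk
        dsimp only
        by_cases h1 : k ≤ i
        · by_cases h2 : k + 1 ≤ i
          · rw [if_pos h1, if_pos h2]
            exact hstep k (by omega)
          · have hki : k = i := by omega
            rw [if_pos h1, if_neg h2, hki, hfe]
            have h3 : i + 1 + (j - i) = j + 1 := by omega
            rw [h3]
            exact hstep j hjn
        · rw [if_neg h1, if_neg (show ¬ k + 1 ≤ i by omega)]
          have h3 : k + 1 + (j - i) = k + (j - i) + 1 := by omega
          rw [h3]
          exact hstep (k + (j - i)) (by omega)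
    have hinj : ∀ i j, i < n → j < n → f i = f j → i = j := by
      intro i j hi hj hfe
      rcases lt_trichotomy i j with h | h | h
      · exact absurd hfe (fun hfe => hinj_aux i j h hj hfe)
      · exact h
      · exact absurd hfe.symm (fun hfe => hinj_aux j i h hi hfe)
    -- chord lemma
    have hchord : ∀ i j, i < n → j < n → (f i, f j) ∈ reorient A B → j = (i + 1) % n := by
      intro i j hi hj hij
      by_contra hne'
      set d := (n + i - j) % n with hddef
      have hd : d < n := Nat.mod_lt _ (by omega)
      have hdn : d ≠ n - 1 := by
        intro h
        apply hne'
        have e1 : ((n + i - j) % n + (j + 1)) % n = ((n + i - j) + (j + 1)) % n :=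
          Nat.mod_add_mod _ _ _
        have e2 : (n + i - j) + (j + 1) = n + (i + 1) := by omega
        have e3 : (n - 1 + (j + 1)) % n = j := by
          have : n - 1 + (j + 1) = n + j := by omega
          rw [this, Nat.add_mod_left, Nat.mod_eq_of_lt hj]
        rw [← hddef] at e1
        rw [h, e3, e2, Nat.add_mod_left] at e1
        exact e1
      have hlt : d + 1 < n := by omega
      refine hmin (d + 1) hlt ⟨by omega, fun m => if m ≤ d then f ((j + m) % n) else f j, ?_, ?_⟩
      · dsimp only
        rw [if_neg (by omega), if_pos (Nat.zero_le d), Nat.add_zero, Nat.mod_eq_of_lt hj]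
      · intro m hm
        dsimp only
        by_cases h1 : m < d
        · rw [if_pos (by omega), if_pos (by omega)]
          have h2 : j + (m + 1) = (j + m) + 1 := by omega
          rw [h2]
          exact hstepm (j + m)
        · have hmd : m = d := by omega
          rw [hmd, if_pos (le_refl d), if_neg (by omega)]
          have h3 : (j + d) % n = i := by
            have e1 : (j + (n + i - j) % n) % n = (j + (n + i - j)) % n :=
              Nat.add_mod_mod _ _ _
            have e2 : j + (n + i - j) = n + i := by omega
            rw [hddef, e1, e2, Nat.add_mod_left, Nat.mod_eq_of_lt hi]
          rw [h3]
          exact hij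
    -- successor mod n is injective
    have hsucc_inj : ∀ i j, i < n → j < n → (i + 1) % n = (j + 1) % n → i = j := by
      have e : ∀ k, k < n → ((k + 1) % n + (n - 1)) % n = k := by
        intro k hk
        rw [Nat.mod_add_mod]
        have : k + 1 + (n - 1) = n + k := by omega
        rw [this, Nat.add_mod_left, Nat.mod_eq_of_lt hk]
      intro i j hi hj h
      rw [← e i hi, ← e j hj, h]
    have hne_succ : ∀ i, i < n → (i + 1) % n ≠ i := by
      intro i hi h
      rcases (show i + 1 < n ∨ i + 1 = n by omega) with h' | h'
      · rw [Nat.mod_eq_of_lt h'] at h; omega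
      · rw [h', Nat.mod_self] at h; omega
    -- the vertex set of the cycle
    set U : Set V := f '' {i | i < n} with hUdef
    have hmemU : ∀ i, i < n → f i ∈ U := fun i hi => ⟨i, hi, rfl⟩
    have hUidx : ∀ x ∈ U, ∃ i, i < n ∧ f i = x := by
      rintro x ⟨i, hi, rfl⟩
      exact ⟨i, hi, rfl⟩
    set D' : Set (V × V) := inducedArcs A U with hD'def
    -- arc classification
    set r1 : V → V → Prop := fun x y => (x, y) ∈ D' ∧ (x, y) ∉ B with hr1def
    set r2 : V → V → Prop := fun x y => (x, y) ∈ D' ∧ (x, y) ∈ B with hr2def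
    have hD'A : ∀ x y, (x, y) ∈ D' → (x, y) ∈ A ∧ x ∈ U ∧ y ∈ U := by
      intro x y h
      exact ⟨h.1, h.2.1, h.2.2⟩
    have hr1idx : ∀ x y, r1 x y → ∃ i, i < n ∧ x = f i ∧ y = f ((i + 1) % n) := by
      intro x y ⟨hD, hnB⟩
      obtain ⟨hxyA, hxU, hyU⟩ := hD'A x y hD
      obtain ⟨i, hi, hfi⟩ := hUidx x hxU
      obtain ⟨j, hj, hfj⟩ := hUidx y hyU
      have hE : (f i, f j) ∈ reorient A B := by
        rw [hfi, hfj]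
        exact Or.inl ⟨hxyA, hnB⟩
      have := hchord i j hi hj hE
      exact ⟨i, hi, hfi.symm, by rw [← this, hfj]⟩
    have hr2idx : ∀ x y, r2 x y → ∃ j, j < n ∧ y = f j ∧ x = f ((j + 1) % n) := by
      intro x y ⟨hD, hBxy⟩
      obtain ⟨hxyA, hxU, hyU⟩ := hD'A x y hD
      obtain ⟨i, hi, hfi⟩ := hUidx x hxU
      obtain ⟨j, hj, hfj⟩ := hUidx y hyU
      have hE : (f j, f i) ∈ reorient A B := by
        refine Or.inr ⟨(x, y), hBxy, ?_⟩
        rw [hfi, hfj]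
        rfl
      have := hchord j i hj hi hE
      exact ⟨j, hj, hfj.symm, by rw [← this, hfi]⟩
    -- no mixing
    have hmix1 : ∀ x y z, r1 x y → r2 y z → False := by
      intro x y z h1 h2
      obtain ⟨i, hi, hx, hy⟩ := hr1idx x y h1
      obtain ⟨j, hj, hz, hy'⟩ := hr2idx y z h2
      have hij : i = j := by
        apply hsucc_inj i j hi hj
        apply hinj _ _ (Nat.mod_lt _ (by omega)) (Nat.mod_lt _ (by omega))
        rw [← hy, ← hy']
      have harc1 : (x, y) ∈ A := (hD'A x y h1.1).1
      have harc2 : (y, z) ∈ A := (hD'A y z h2.1).1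
      apply hA.2.1 (x, y) harc1
      have hzx : z = x := by rw [hz, hx, hij]
      show (y, x) ∈ A
      rw [← hzx]
      exact harc2
    have hmix2 : ∀ x y z, r2 x y → r1 y z → False := by
      intro x y z h1 h2
      obtain ⟨j, hj, hy, hx⟩ := hr2idx x y h1
      obtain ⟨i, hi, hy', hz⟩ := hr1idx y z h2
      have hij : i = j := hinj i j hi hj (by rw [← hy', ← hy])
      have harc1 : (x, y) ∈ A := (hD'A x y h1.1).1
      have harc2 : (y, z) ∈ A := (hD'A y z h2.1).1
      apply hA.2.1 (y, z) harc2
      have hzx : z = x := by rw [hz, hx, hij]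
      show (z, y) ∈ A
      rw [hzx]
      exact harc1
    -- main case split
    by_cases hall : ∀ a ∈ D', a ∈ transRed D'
    · -- no deleted arc: the cycle survives in the transitive reduction, contradicting forest
      have hHadj : ∀ i, i < n →
          (undirectedGraph (transRed D')).Adj (f i) (f ((i + 1) % n)) := by
        intro i hi
        have hne' : f i ≠ f ((i + 1) % n) := by
          intro h
          exact hne_succ i hi (hinj _ _ (Nat.mod_lt _ (by omega)) hi h.symm)
        rcases hstep' i hi with ⟨hA', hnB⟩ | ⟨b, hb, hs⟩
        · have hmem : (f i, f ((i + 1) % n)) ∈ D' :=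
            ⟨hA', hmemU i hi, hmemU _ (Nat.mod_lt _ (by omega))⟩
          exact ⟨hne', Or.inl (hall _ hmem)⟩
        · have hbe : b = (f ((i + 1) % n), f i) := by
            have := congrArg Prod.swap hs
            simpa using this
          have hmem : (f ((i + 1) % n), f i) ∈ D' :=
            ⟨hB (hbe ▸ hb), hmemU _ (Nat.mod_lt _ (by omega)), hmemU i hi⟩
          exact ⟨hne', Or.inr (hall _ hmem)⟩
      have hac := hV U
      rw [IsForestArcs, SimpleGraph.isAcyclic_iff_forall_adj_isBridge] at hac
      have hadj01 : (undirectedGraph (transRed D')).Adj (f 0) (f 1) := by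
        have := hHadj 0 (by omega)
        have e : (0 + 1) % n = 1 := by
          rw [Nat.zero_add]
          exact Nat.mod_eq_of_lt (by omega)
        rwa [e] at this
      have hbr := hac hadj01
      rw [SimpleGraph.isBridge_iff] at hbr
      apply hbr
      -- build a walk from f 1 around to f 0 avoiding the edge s(f 0, f 1)
      have hadj' : ∀ i, 1 ≤ i → i < n →
          (undirectedGraph (transRed D') \
            SimpleGraph.fromEdgeSet {s(f 0, f 1)}).Adj (f i) (f ((i + 1) % n)) := by
        intro i h1 hi
        rw [SimpleGraph.sdiff_adj]
        refine ⟨hHadj i hi, ?_⟩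
        rw [SimpleGraph.fromEdgeSet_adj]
        rintro ⟨hmem, -⟩
        rw [Set.mem_singleton_iff, Sym2.eq_iff] at hmem
        rcases hmem with ⟨ha, hb⟩ | ⟨ha, hb⟩
        · have := hinj i 0 hi (by omega) ha
          omega
        · have hi1 : i = 1 := hinj i 1 hi (by omega) ha
          have := hinj ((i + 1) % n) 0 (Nat.mod_lt _ (by omega)) (by omega) hb
          rw [hi1] at this
          rw [Nat.mod_eq_of_lt (by omega : (1:ℕ) + 1 < n)] at this
          omega
      have hreach : ∀ i, 1 ≤ i → i < n →
          (undirectedGraph (transRed D') \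
            SimpleGraph.fromEdgeSet {s(f 0, f 1)}).Reachable (f 1) (f i) := by
        intro i
        induction i with
        | zero => omega
        | succ k ih =>
            intro h1 hk
            rcases (show k + 1 = 1 ∨ 1 ≤ k by omega) with h | h
            · rw [h]
            · have hk' : k < n := by omega
              have := (ih h (by omega)).trans ((hadj' k h hk').reachable)
              rwa [Nat.mod_eq_of_lt hk] at this
      have hlast : (undirectedGraph (transRed D') \
          SimpleGraph.fromEdgeSet {s(f 0, f 1)}).Reachable (f 1) (f 0) := by
        have h1 := hreach (n - 1) (by omega) (by omega)
        have h2 := (hadj' (n - 1) (by omega) (by omega)).reachable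
        rw [show n - 1 + 1 = n by omega, Nat.mod_self] at h2
        exact h1.trans h2
      exact hlast.symm
    · -- some arc deleted by transitive reduction
      push_neg at hall
      obtain ⟨a, haD, hnotred⟩ := hall
      have hw : ∃ w, ArcRel D' a.1 w ∧ Relation.TransGen (ArcRel D') w a.2 := by
        by_contra h
        exact hnotred ⟨haD, h⟩
      obtain ⟨w, hw1, hw2⟩ := hw
      have hmono : ∀ x y, ArcRel D' x y → (r1 x y ∨ r2 x y) := by
        intro x y h
        by_cases hxy : (x, y) ∈ B
        · exact Or.inr ⟨h, hxy⟩
        · exact Or.inl ⟨h, hxy⟩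
      have hsplit := transGen_union_split hmix1 hmix2 (Relation.TransGen.mono hmono _ _ hw2)
      have haA : a ∈ A := haD.1
      obtain ⟨i, hi, hui⟩ := hUidx a.1 haD.2.1
      obtain ⟨j, hj, huj⟩ := hUidx a.2 haD.2.2
      rcases hsplit with hp | hp
      · by_cases hstepB : (a.1, w) ∈ B
        · obtain ⟨w', hw', -⟩ := Relation.TransGen.head'_iff.mp hp
          exact hmix2 a.1 w w' ⟨hw1, hstepB⟩ hw'
        · have hr1uw : r1 a.1 w := ⟨hw1, hstepB⟩
          have hpath : Relation.TransGen r1 a.1 a.2 := hp.head hr1uw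
          have hAB : Relation.TransGen (ArcRel (A \ B)) a.1 a.2 :=
            Relation.TransGen.mono (fun x y h => ⟨(hD'A x y h.1).1, h.2⟩) _ _ hpath
          have haAB : a ∈ A \ B := hcoc a haA hAB
          have hE : (f i, f j) ∈ reorient A B := by
            rw [hui, huj]
            exact Or.inl haAB
          have hji : j = (i + 1) % n := hchord i j hi hj hE
          obtain ⟨i', hi', hx', hw'⟩ := hr1idx a.1 w hr1uw
          have hii' : i' = i := hinj i' i hi' hi (by rw [← hx', ← hui])
          have hwv : w = a.2 := by rw [hw', hii', ← hji, huj]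
          rw [hwv] at hp
          exact hA.2.2 a.2 (Relation.TransGen.mono (fun x y h => (hD'A x y h.1).1) _ _ hp)
      · by_cases hstepB : (a.1, w) ∈ B
        · have hr2uw : r2 a.1 w := ⟨hw1, hstepB⟩
          have hpath : Relation.TransGen r2 a.1 a.2 := hp.head hr2uw
          have hBB : Relation.TransGen (ArcRel B) a.1 a.2 := Relation.TransGen.mono (fun x y h => h.2) _ _ hpath
          have haBmem : a ∈ B := hcl a haA hBB
          have hE : (f j, f i) ∈ reorient A B := by
            refine Or.inr ⟨a, haBmem, ?_⟩
            rw [huj, hui]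
            rfl
          have hij : i = (j + 1) % n := hchord j i hj hi hE
          obtain ⟨j', hj', hy', hx'⟩ := hr2idx a.1 w hr2uw
          have hjj' : j' = j := by
            apply hsucc_inj j' j hj' hj
            apply hinj _ _ (Nat.mod_lt _ (by omega)) (Nat.mod_lt _ (by omega))
            rw [← hx', ← hui, hij]
          have hwv : w = a.2 := by rw [hy', hjj', huj]
          rw [hwv] at hp
          exact hA.2.2 a.2 (Relation.TransGen.mono (fun x y h => (hD'A x y h.1).1) _ _ hp)
        · obtain ⟨w', hw', -⟩ := Relation.TransGen.head'_iff.mp hp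
          exact hmix1 a.1 w w' ⟨hw1, hstepB⟩ hw'
  · rintro ⟨-, hac⟩
    constructor
    · intro a ha htg
      by_contra hnB
      apply hac a.1
      have hrev : Relation.TransGen (fun x y => ArcRel B y x) a.2 a.1 :=
        Relation.transGen_swap.mpr htg
      have hrev' : Relation.TransGen (ArcRel (reorient A B)) a.2 a.1 :=
        Relation.TransGen.mono (fun x y h => Or.inr ⟨(y, x), h, rfl⟩) _ _ hrev
      have hstep1 : ArcRel (reorient A B) a.1 a.2 := Or.inl ⟨ha, hnB⟩
      exact (Relation.TransGen.single hstep1).trans hrev'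
    · intro a ha htg
      refine ⟨ha, ?_⟩
      intro hB'
      apply hac a.1
      have hfor : Relation.TransGen (ArcRel (reorient A B)) a.1 a.2 :=
        Relation.TransGen.mono (fun x y h => Or.inl h) _ _ htg
      have hstep1 : ArcRel (reorient A B) a.2 a.1 := Or.inr ⟨a, hB', rfl⟩
      exact hfor.trans (Relation.TransGen.single hstep1)
end

section
/- Let D = (V, A) be a vertebrate directed acyclic graph and let B_1, …, B_k ∈ AR(D) with k ≥ 1. Then the set B_∨ = {(u,v) ∈ A : there is a directed path from u to v all of whose arcs belong to B_1 ∪ … ∪ B_k} belongs to AR(D) and is the least upper bound of {B_1, …, B_k} in AR(D); dually, the set B_∧ = A ∖ {(u,v) ∈ A : there is a directed path from u to v all of whose arcs belong to (A ∖ B_1) ∪ … ∪ (A ∖ B_k)} belongs to AR(D) and is the greatest lower bound of {B_1, …, B_k} in AR(D). -/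
/-- The candidate join: arcs of `A` whose endpoints are joined by a directed path
all of whose arcs are reversed in at least one of the reorientations. -/
def joinSet {V : Type*} (A : Set (V × V)) {k : ℕ} (B : Fin k → ARP A) : Set (V × V) :=
  {a ∈ A | Relation.TransGen (fun x y => ∃ i : Fin k, (x, y) ∈ (B i).1) a.1 a.2}

/-- The candidate meet: complement in `A` of the arcs of `A` whose endpoints are
joined by a directed path all of whose arcs are unreversed in at least one of the
reorientations. -/
def meetSet {V : Type*} (A : Set (V × V)) {k : ℕ} (B : Fin k → ARP A) : Set (V × V) :=
  A \ {a ∈ A | Relation.TransGen (fun x y => ∃ i : Fin k, (x, y) ∈ A \ (B i).1) a.1 a.2}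


namespace Stmt3

open Relation Set

variable {V : Type*}

lemma transGen_to_walk {r : V → V → Prop} {a b : V} (h : Relation.TransGen r a b) :
    ∃ m : ℕ, ∃ w : ℕ → V, 0 < m ∧ w 0 = a ∧ w m = b ∧ ∀ l, l < m → r (w l) (w (l + 1)) := by
  induction h with
  | @single c h =>
    refine ⟨1, fun l => if l = 0 then a else c, one_pos, by simp, by simp, ?_⟩
    intro l hl
    have hl0 : l = 0 := by omega
    subst hl0
    simpa using h
  | @tail b' c hab hbc ih =>
    obtain ⟨m, w, hm, h0, hb, hs⟩ := ih
    refine ⟨m + 1, fun l => if l ≤ m then w l else c, by omega, by simp [h0], by simp, ?_⟩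
    intro l hl
    rcases Nat.lt_or_ge l m with hlm | hlm
    · have h1 : l ≤ m := by omega
      have h2 : l + 1 ≤ m := by omega
      simpa [h1, h2] using hs l hlm
    · have hlm' : l = m := by omega
      subst hlm'
      have h2 : ¬ (l + 1 ≤ l) := by omega
      simpa [h2, hb] using hbc

lemma walk_transGen {r : V → V → Prop} {w : ℕ → V} {m : ℕ}
    (hs : ∀ l, l < m → r (w l) (w (l + 1))) :
    ∀ i j, i < j → j ≤ m → Relation.TransGen r (w i) (w j) := by
  intro i j
  induction j with
  | zero => omega
  | succ j ihj =>
    intro hij hjm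
    rcases Nat.lt_or_ge i j with h | h
    · exact (ihj h (by omega)).tail (hs j (by omega))
    · have hij' : i = j := by omega
      subst hij'
      exact TransGen.single (hs i (by omega))

lemma first_exceed {p : ℕ → ℕ} {m h : ℕ} (h0 : p 0 ≤ h) (hm : h < p m) :
    ∃ l, l < m ∧ p l ≤ h ∧ h < p (l + 1) := by
  by_contra hc
  push_neg at hc
  have key : ∀ l, l ≤ m → p l ≤ h := by
    intro l
    induction l with
    | zero => intro _; exact h0
    | succ l ih => intro hl; exact hc l (by omega) (ih (by omega))
  exact absurd (key m le_rfl) (by omega)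

lemma transGen_pullback {α β : Type*} {f : α → β} (_hf : Function.Injective f)
    {r : β → β → Prop} {r' : α → α → Prop}
    (hdom : ∀ x y, r x y → x ∈ Set.range f ∧ y ∈ Set.range f)
    (hstep : ∀ x y, r (f x) (f y) → r' x y) :
    ∀ {x : α} {b : β}, Relation.TransGen r (f x) b → ∀ {y : α}, b = f y →
      Relation.TransGen r' x y := by
  intro x b h
  induction h with
  | @single c hc =>
    intro y hy
    subst hy
    exact TransGen.single (hstep _ _ hc)
  | @tail b' c hb hc ih =>
    intro y hy
    subst hy
    obtain ⟨z, hz⟩ := (hdom _ _ hc).1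
    subst hz
    exact (ih rfl).tail (hstep _ _ hc)

lemma exists_simple_cycle {r : V → V → Prop} {v : V} (h : Relation.TransGen r v v) :
    ∃ n : ℕ, 0 < n ∧ ∃ c : ℕ → V, (∀ t, t < n → r (c t) (c (t + 1))) ∧ c n = c 0 ∧
      (∀ a b, a < n → b < n → c a = c b → a = b) := by
  classical
  have hQ : ∃ m : ℕ, 0 < m ∧ ∃ c : ℕ → V, (∀ t, t < m → r (c t) (c (t + 1))) ∧ c m = c 0 := by
    obtain ⟨m, w, hm, h0, hb, hs⟩ := transGen_to_walk h
    exact ⟨m, hm, w, hs, by rw [hb, h0]⟩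
  obtain ⟨hpos, c, hsc, hcc⟩ := Nat.find_spec hQ
  set m₀ := Nat.find hQ with hm₀
  have key : ∀ a b : ℕ, a < b → b < m₀ → c a = c b → False := by
    intro a b hab hbm hcab
    have hQb : 0 < b - a ∧ ∃ c' : ℕ → V, (∀ t, t < b - a → r (c' t) (c' (t + 1))) ∧
        c' (b - a) = c' 0 := by
      refine ⟨by omega, fun t => c (a + t), ?_, ?_⟩
      · intro t ht
        have := hsc (a + t) (by omega)
        simpa [Nat.add_assoc] using this
      · show c (a + (b - a)) = c (a + 0)
        have h1 : a + (b - a) = b := by omega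
        rw [h1, Nat.add_zero]
        exact hcab.symm
    exact Nat.find_min hQ (by omega) hQb
  refine ⟨m₀, hpos, c, hsc, hcc, ?_⟩
  intro a b ha hb heq
  rcases Nat.lt_trichotomy a b with hlt | heqv | hlt
  · exact absurd heq (fun hh => (key _ _ hlt hb hh).elim)
  · exact heqv
  · exact absurd heq.symm (fun hh => (key _ _ hlt ha hh).elim)

/-- steps of a cyclic walk, through the wrap, in mod form -/
lemma cyc_step_mod {r : V → V → Prop} {c : ℕ → V} {n : ℕ} (hn : 0 < n)
    (hsc : ∀ t, t < n → r (c t) (c (t + 1))) (hcc : c n = c 0) :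
    ∀ s : ℕ, r (c (s % n)) (c ((s + 1) % n)) := by
  intro s
  have h1 : s % n < n := Nat.mod_lt _ hn
  have hkey : (s + 1) % n = (s % n + 1) % n := (Nat.mod_add_mod s n 1).symm
  rcases Nat.lt_or_ge (s % n + 1) n with hlt | hge
  · have h4 : (s + 1) % n = s % n + 1 := by rw [hkey, Nat.mod_eq_of_lt hlt]
    rw [h4]
    exact hsc _ h1
  · have h2 : s % n = n - 1 := by omega
    have h3 : (s + 1) % n = 0 := by
      rw [hkey, h2, (by omega : n - 1 + 1 = n), Nat.mod_self]
    rw [h3, ← hcc, h2, ← (by omega : n - 1 + 1 = n)]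
    exact hsc _ (by omega)


def JSet (A : Set (V × V)) (R : V → V → Prop) : Set (V × V) :=
  {a ∈ A | Relation.TransGen R a.1 a.2}

def Estar (A : Set (V × V)) (R : V → V → Prop) (a b : V) : Prop :=
  ((a, b) ∈ A ∧ ¬ Relation.TransGen R a b) ∨ R b a

section Basic

variable {A : Set (V × V)} {R : V → V → Prop}

lemma S_irrefl (hA : IsDAG A) (hR : ∀ x y, R x y → (x, y) ∈ A) (a : V) :
    ¬ Relation.TransGen R a a := fun h =>
  hA.2.2 a (Relation.TransGen.mono (fun x y hxy => (hR x y hxy : ArcRel A x y)) _ _ h)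

lemma estar_to_E (hR : ∀ x y, R x y → (x, y) ∈ A) {a b : V} (h : Estar A R a b) :
    ArcRel (reorient A (JSet A R)) a b := by
  rcases h with ⟨hab, hnS⟩ | hba
  · exact Or.inl ⟨hab, fun hJ => hnS hJ.2⟩
  · exact Or.inr ⟨(b, a), ⟨hR _ _ hba, Relation.TransGen.single hba⟩, rfl⟩

lemma E_to_estar {a b : V} (h : ArcRel (reorient A (JSet A R)) a b) :
    Relation.TransGen (Estar A R) a b := by
  rcases h with hab | ⟨p, hp, hsw⟩
  · exact Relation.TransGen.single (Or.inl ⟨hab.1, fun hS => hab.2 ⟨hab.1, hS⟩⟩)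
  · have hp' : p = (b, a) := by
      have : p = (a, b).swap := by rw [← hsw, Prod.swap_swap]
      simpa using this
    subst hp'
    have hS : Relation.TransGen R b a := hp.2
    have hrev : Relation.TransGen (Function.swap R) a b := Relation.transGen_swap.mpr hS
    exact Relation.TransGen.mono (fun x y hxy => Or.inr hxy) _ _ hrev

lemma acyclic_swap {E : Set (V × V)} (h : AcyclicArcs E) :
    AcyclicArcs (Prod.swap '' E) := by
  intro v hv
  apply h v
  have h1 : Relation.TransGen (Function.swap (ArcRel E)) v v := by
    refine Relation.TransGen.mono (fun x y hxy => ?_) _ _ hv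
    obtain ⟨p, hp, hsw⟩ := hxy
    have : p = (y, x) := by
      have : p = (x, y).swap := by rw [← hsw, Prod.swap_swap]
      simpa using this
    subst this
    exact hp
  exact Relation.transGen_swap.mp h1

lemma reorient_compl {B : Set (V × V)} (hB : B ⊆ A) :
    reorient A (A \ B) = Prod.swap '' (reorient A B) := by
  rw [reorient, reorient, Set.image_union, Set.diff_diff_cancel_left hB]
  have h2 : Prod.swap '' (Prod.swap '' B) = B := by
    rw [Set.image_image]
    simp
  rw [h2, Set.union_comm]

lemma ARmem_compl {B : Set (V × V)} (hB : ARmem A B) : ARmem A (A \ B) :=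
  ⟨Set.diff_subset, by rw [reorient_compl hB.1]; exact acyclic_swap hB.2⟩

end Basic

section Graph

lemma acyclic_no_cycle {G : SimpleGraph V} (hG : G.IsAcyclic) {n : ℕ} (hn : 3 ≤ n)
    {c : ℕ → V} (hcc : c n = c 0) (hinj : ∀ a b, a < n → b < n → c a = c b → a = b)
    (hadj : ∀ t, t < n → G.Adj (c t) (c (t + 1))) : False := by
  classical
  have walkup : ∀ s : ℕ, 1 + s ≤ n → ∃ w : G.Walk (c 1) (c (1 + s)),
      w.support = (List.range (s + 1)).map (fun t => c (1 + t)) := by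
    intro s
    induction s with
    | zero => intro _; exact ⟨SimpleGraph.Walk.nil, by rw [show List.range 1 = [0] from rfl]; simp⟩
    | succ s ih =>
      intro h
      obtain ⟨w, hw⟩ := ih (by omega)
      refine ⟨w.concat (hadj (1 + s) (by omega)), ?_⟩
      rw [SimpleGraph.Walk.support_concat, hw]
      rw [show List.range (s + 1 + 1) = List.range (s + 1) ++ [s + 1] from List.range_succ (n := s + 1)]
      simp
  obtain ⟨w, hw⟩ := walkup (n - 2) (by omega)
  have hlast : 1 + (n - 2) + 1 = n := by omega
  have hcopy : c (1 + (n - 2) + 1) = c 0 := by rw [hlast, hcc]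
  set q := (w.concat (hadj (1 + (n - 2)) (by omega))).copy rfl hcopy with hq
  have hqsupp : q.support = ((List.range (n - 2 + 1)).map (fun t => c (1 + t))) ++ [c 0] := by
    rw [hq, SimpleGraph.Walk.support_copy, SimpleGraph.Walk.support_concat, hw,
      hcopy]
  have hq_nodup : q.support.Nodup := by
    rw [hqsupp, List.nodup_append]
    refine ⟨?_, by simp, ?_⟩
    · refine List.Nodup.map_on ?_ List.nodup_range
      intro x hx y hy hxy
      simp only [List.mem_range] at hx hy
      have := hinj (1 + x) (1 + y) (by omega) (by omega) hxy
      omega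
    · intro x hx
      simp only [List.mem_map, List.mem_range] at hx
      obtain ⟨t, ht, rfl⟩ := hx
      simp only [List.mem_singleton, forall_eq]
      intro hcontra
      have := hinj (1 + t) 0 (by omega) (by omega) hcontra
      omega
  have hp2 : q.IsPath := SimpleGraph.Walk.IsPath.mk' hq_nodup
  have hadj01 : G.Adj (c 1) (c 0) := by
    have := hadj 0 (by omega)
    simpa using this.symm
  set p := SimpleGraph.Walk.cons hadj01 SimpleGraph.Walk.nil with hp
  have hp1 : p.IsPath := by
    refine SimpleGraph.Walk.IsPath.mk' ?_
    rw [hp]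
    simp only [SimpleGraph.Walk.support_cons, SimpleGraph.Walk.support_nil]
    refine List.nodup_cons.mpr ⟨?_, by simp⟩
    simp only [List.mem_singleton]
    intro hcontra
    have := hinj 1 0 (by omega) (by omega) hcontra
    omega
  have heq := (SimpleGraph.isAcyclic_iff_path_unique.mp hG) ⟨p, hp1⟩ ⟨q, hp2⟩
  have hsupp_eq : p.support = q.support := by
    have : (⟨p, hp1⟩ : G.Path (c 1) (c 0)).val = (⟨q, hp2⟩ : G.Path (c 1) (c 0)).val := by
      rw [heq]
    simpa using congrArg SimpleGraph.Walk.support this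
  have hlen : p.support.length = q.support.length := by rw [hsupp_eq]
  rw [hqsupp, hp] at hlen
  simp only [SimpleGraph.Walk.support_cons, SimpleGraph.Walk.support_nil,
    List.length_append, List.length_map, List.length_range, List.length_cons,
    List.length_singleton] at hlen
  omega

end Graph

section Restrict

universe u

def restrictArcs {V : Type u} (A : Set (V × V)) (U : Set V) : Set (↥U × ↥U) :=
  {p | ((p.1 : V), (p.2 : V)) ∈ A}

variable {V : Type u} {A : Set (V × V)} {R : V → V → Prop}

lemma isDAG_restrict (hA : IsDAG A) (U : Set V) : IsDAG (restrictArcs A U) := by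
  refine ⟨?_, ?_, ?_⟩
  · rintro ⟨a, b⟩ hab h
    exact hA.1 _ hab (congrArg Subtype.val h)
  · rintro ⟨a, b⟩ hab hsw
    exact hA.2.1 ((a : V), (b : V)) hab hsw
  · intro v hv
    exact hA.2.2 _ (Relation.TransGen.lift Subtype.val (fun a b hab => hab) _ _ hv)

lemma vertebrate_restrict (hV : Vertebrate A) (U : Set V) :
    Vertebrate (restrictArcs A U) := by
  intro U'
  set W : Set V := Subtype.val '' U' with hW
  have hforest := hV W
  have hmem : ∀ a b : ↥U, (a, b) ∈ inducedArcs (restrictArcs A U) U' ↔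
      ((a : V), (b : V)) ∈ inducedArcs A W := by
    intro a b
    constructor
    · rintro ⟨hab, ha, hb⟩
      exact ⟨hab, ⟨a, ha, rfl⟩, ⟨b, hb, rfl⟩⟩
    · rintro ⟨hab, ha, hb⟩
      refine ⟨hab, ?_, ?_⟩
      · obtain ⟨a', ha', haa⟩ := ha
        rwa [← Subtype.coe_injective haa]
      · obtain ⟨b', hb', hbb⟩ := hb
        rwa [← Subtype.coe_injective hbb]
  have hdom : ∀ x y, ArcRel (inducedArcs A W) x y →
      x ∈ Set.range (Subtype.val : ↥U → V) ∧ y ∈ Set.range (Subtype.val : ↥U → V) := by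
    rintro x y ⟨_, hx, hy⟩
    constructor
    · obtain ⟨x', _, rfl⟩ := hx
      exact ⟨x', rfl⟩
    · obtain ⟨y', _, rfl⟩ := hy
      exact ⟨y', rfl⟩
  have key : ∀ a b : ↥U, (a, b) ∈ transRed (inducedArcs (restrictArcs A U) U') →
      ((a : V), (b : V)) ∈ transRed (inducedArcs A W) := by
    rintro a b ⟨h1, h2⟩
    refine ⟨(hmem a b).mp h1, ?_⟩
    rintro ⟨z, hz1, hz2⟩
    have hzW : z ∈ W := hz1.2.2
    obtain ⟨z₀, hz₀, rfl⟩ := hzW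
    apply h2
    exact ⟨z₀, (hmem a z₀).mpr hz1,
      transGen_pullback Subtype.coe_injective hdom (fun x y hxy => (hmem x y).mpr hxy) hz2 rfl⟩
  rw [IsForestArcs, SimpleGraph.isAcyclic_iff_path_unique]
  intro v w p q
  have hforest' := SimpleGraph.isAcyclic_iff_path_unique.mp hforest
  have fadj : ∀ {a b : ↥U},
      (undirectedGraph (transRed (inducedArcs (restrictArcs A U) U'))).Adj a b →
      (undirectedGraph (transRed (inducedArcs A W))).Adj ↑a ↑b := by
    intro a b hab
    simp only [undirectedGraph, SimpleGraph.fromRel_adj] at hab ⊢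
    obtain ⟨hne, hor⟩ := hab
    refine ⟨fun hc => hne (Subtype.coe_injective hc), ?_⟩
    rcases hor with h | h
    · exact Or.inl (key _ _ h)
    · exact Or.inr (key _ _ h)
  let f : undirectedGraph (transRed (inducedArcs (restrictArcs A U) U')) →g
      undirectedGraph (transRed (inducedArcs A W)) := ⟨Subtype.val, fadj⟩
  have hfinj : Function.Injective f := Subtype.coe_injective
  have heq := hforest' (p.map f hfinj) (q.map f hfinj)
  exact SimpleGraph.Path.map_injective hfinj v w heq

lemma restrict_step [Fintype V]
    (hA : IsDAG A) (hV : Vertebrate A) (hR : ∀ x y, R x y → (x, y) ∈ A)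
    (hHB : ∀ u v, R u v → ∃ B₀ : Set (V × V), (u, v) ∈ B₀ ∧ (∀ p ∈ B₀, R p.1 p.2) ∧ ARmem A B₀)
    (U : Set V) (w : V) (hw : w ∉ U)
    (IH : ∀ (V' : Type u) [Fintype V'] (A' : Set (V' × V')) (R' : V' → V' → Prop),
      Fintype.card V' < Fintype.card V → IsDAG A' → Vertebrate A' →
      (∀ x y, R' x y → (x, y) ∈ A') →
      (∀ u v, R' u v → ∃ B₀ : Set (V' × V'), (u, v) ∈ B₀ ∧ (∀ p ∈ B₀, R' p.1 p.2) ∧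
        ARmem A' B₀) →
      AcyclicArcs (reorient A' (JSet A' R')))
    {x : ↥U} (hcyc : Relation.TransGen (fun a b : ↥U => Estar A R ↑a ↑b) x x) : False := by
  classical
  haveI : Fintype ↥U := Fintype.ofFinite ↥U
  have hcard : Fintype.card ↥U < Fintype.card V := by
    apply Fintype.card_lt_of_injective_of_notMem (Subtype.val : ↥U → V)
      Subtype.coe_injective (b := w)
    rintro ⟨⟨y, hy⟩, rfl⟩
    exact hw hy
  have hA' : IsDAG (restrictArcs A U) := isDAG_restrict hA U
  have hV' : Vertebrate (restrictArcs A U) := vertebrate_restrict hV U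
  set R' : ↥U → ↥U → Prop := fun a b => R ↑a ↑b with hR'def
  have hR' : ∀ a b : ↥U, R' a b → (a, b) ∈ restrictArcs A U := fun a b h => hR _ _ h
  have hHB' : ∀ u v : ↥U, R' u v → ∃ B₀, (u, v) ∈ B₀ ∧ (∀ p ∈ B₀, R' p.1 p.2) ∧
      ARmem (restrictArcs A U) B₀ := by
    intro u v h
    obtain ⟨B₀, hmem, hsub, hBA, hBacy⟩ := hHB ↑u ↑v h
    refine ⟨{p : ↥U × ↥U | ((p.1 : V), (p.2 : V)) ∈ B₀}, hmem, fun p hp => hsub _ hp,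
      fun p hp => hBA hp, ?_⟩
    intro v' hv'
    apply hBacy ↑v'
    refine Relation.TransGen.lift Subtype.val ?_ _ _ hv'
    rintro a b (⟨h1, h2⟩ | ⟨pq, hpq, hsw⟩)
    · exact Or.inl ⟨h1, fun hc => h2 hc⟩
    · refine Or.inr ⟨((pq.1 : V), (pq.2 : V)), hpq, ?_⟩
      have h1 : pq.2 = a := congrArg Prod.fst hsw
      have h2 : pq.1 = b := congrArg Prod.snd hsw
      rw [show Prod.swap ((pq.1 : V), (pq.2 : V)) = ((pq.2 : V), (pq.1 : V)) from rfl,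
        h1, h2]
  have hacy' := IH ↥U (restrictArcs A U) R' hcard hA' hV' hR' hHB'
  apply hacy' x
  refine Relation.TransGen.mono ?_ _ _ hcyc
  rintro a b (⟨h1, h2⟩ | h3)
  · refine Or.inl ⟨h1, ?_⟩
    rintro ⟨_, hS⟩
    exact h2 (Relation.TransGen.lift Subtype.val (fun a b hab => hab) _ _ hS)
  · exact Or.inr ⟨(b, a), ⟨hR' _ _ h3, Relation.TransGen.single h3⟩, rfl⟩

end Restrict

section Spanning

variable {V : Type*}

lemma mod_cancel {n a x y : ℕ} (hx : x < n) (hy : y < n)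
    (h : (a + x) % n = (a + y) % n) : x = y := by
  have h' : Nat.ModEq n (a + x) (a + y) := h
  have := Nat.ModEq.add_left_cancel' a h'
  rwa [Nat.ModEq, Nat.mod_eq_of_lt hx, Nat.mod_eq_of_lt hy] at this

lemma estar_irrefl {A : Set (V × V)} {R : V → V → Prop} (hA : IsDAG A)
    (hR : ∀ x y, R x y → (x, y) ∈ A) (a : V) : ¬ Estar A R a a := by
  rintro (⟨h1, _⟩ | h2)
  · exact hA.1 _ h1 rfl
  · exact S_irrefl hA hR a (Relation.TransGen.single h2)

lemma witness_path {A : Set (V × V)} {u v z : V} (hz1 : (u, z) ∈ A)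
    (hz2 : Relation.TransGen (ArcRel A) z v) :
    ∃ m : ℕ, ∃ W : ℕ → V, 2 ≤ m ∧ W 0 = u ∧ W m = v ∧
      ∀ l, l < m → (W l, W (l + 1)) ∈ A := by
  obtain ⟨m', w', hm', h0, hb, hs⟩ := transGen_to_walk hz2
  refine ⟨m' + 1, fun l => if l = 0 then u else w' (l - 1), by omega, by simp, ?_, ?_⟩
  · simp only [show m' + 1 ≠ 0 by omega, if_false]
    simpa using hb
  · intro l hl
    rcases Nat.eq_zero_or_pos l with rfl | hpos
    · simpa [h0] using hz1
    · have h1 : l ≠ 0 := by omega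
      have h2 : l + 1 ≠ 0 := by omega
      simp only [h1, h2, if_false]
      have := hs (l - 1) (by omega)
      rwa [show l - 1 + 1 = l from by omega] at this

lemma spanning_contra {A : Set (V × V)} {R : V → V → Prop}
    (hA : IsDAG A) (hV : Vertebrate A) (hR : ∀ x y, R x y → (x, y) ∈ A)
    (hHB : ∀ u v, R u v → ∃ B₀ : Set (V × V), (u, v) ∈ B₀ ∧ (∀ p ∈ B₀, R p.1 p.2) ∧ ARmem A B₀)
    {n : ℕ} (hn3 : 3 ≤ n) {c : ℕ → V}
    (hsc : ∀ t, t < n → Estar A R (c t) (c (t + 1)))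
    (hcc : c n = c 0)
    (hinj : ∀ a b, a < n → b < n → c a = c b → a = b)
    (hsurj : ∀ x : V, ∃ i, i < n ∧ c i = x)
    (hmaster : ∀ a b, Estar A R a b → ∀ i j, i < n → j < n → c i = a → c j = b →
      j = (i + 1) % n) :
    False := by
  classical
  have hn : 0 < n := by omega
  have hAirr : ∀ x, ¬ Relation.TransGen (ArcRel A) x x := hA.2.2
  have hSA : ∀ {x y}, Relation.TransGen R x y → Relation.TransGen (ArcRel A) x y :=
    fun h => Relation.TransGen.mono (fun p q hpq => (hR p q hpq : ArcRel A p q)) _ _ h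
  -- rewrite the forest hypothesis on the full vertex set
  have hindA : inducedArcs A Set.univ = A := by
    ext ⟨x, y⟩
    simp [inducedArcs]
  have hforest : (undirectedGraph (transRed A)).IsAcyclic := by
    have := hV Set.univ
    rwa [IsForestArcs, hindA] at this
  -- pick a cycle step whose underlying arc is not in the transitive reduction
  have hEx : ∃ t, t < n ∧ ¬ (undirectedGraph (transRed A)).Adj (c t) (c (t + 1)) := by
    by_contra hcon
    push_neg at hcon
    exact acyclic_no_cycle hforest hn3 hcc hinj hcon
  obtain ⟨i₀, hi₀, hnadj⟩ := hEx
  -- getting a witness path for a non-TR arc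
  have getwit : ∀ p q : V, (p, q) ∈ A → ¬ (undirectedGraph (transRed A)).Adj p q →
      ∃ z, (p, z) ∈ A ∧ Relation.TransGen (ArcRel A) z q := by
    intro p q hpq hnadj'
    by_contra hc
    push_neg at hc
    apply hnadj'
    simp only [undirectedGraph, SimpleGraph.fromRel_adj]
    refine ⟨hA.1 _ hpq, Or.inl ⟨hpq, ?_⟩⟩
    rintro ⟨z, hz1, hz2⟩
    exact hc z hz1 hz2
  -- rotated cycle
  set c' : ℕ → V := fun t => c ((i₀ + 1 + t) % n) with hc'def
  have hmod := cyc_step_mod hn hsc hcc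
  have hinj' : ∀ a b, a < n → b < n → c' a = c' b → a = b := by
    intro a b ha hb h
    exact mod_cancel ha hb (hinj _ _ (Nat.mod_lt _ hn) (Nat.mod_lt _ hn) h)
  have hsurj' : ∀ x : V, ∃ i, i < n ∧ c' i = x := by
    intro x
    obtain ⟨i, hi, hci⟩ := hsurj x
    have hr : (i₀ + 1) % n < n := Nat.mod_lt _ hn
    refine ⟨(n + i - (i₀ + 1) % n) % n, Nat.mod_lt _ hn, ?_⟩
    show c ((i₀ + 1 + (n + i - (i₀ + 1) % n) % n) % n) = x
    have e1 : (i₀ + 1 + (n + i - (i₀ + 1) % n) % n) % n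
        = ((i₀ + 1) % n + (n + i - (i₀ + 1) % n) % n) % n := by
      conv_lhs => rw [← Nat.mod_add_mod]
    have e2 : ((i₀ + 1) % n + (n + i - (i₀ + 1) % n) % n) % n
        = ((i₀ + 1) % n + (n + i - (i₀ + 1) % n)) % n := Nat.add_mod_mod _ _ _
    have e3 : (i₀ + 1) % n + (n + i - (i₀ + 1) % n) = n + i := by omega
    rw [e1, e2, e3, Nat.add_mod_left, Nat.mod_eq_of_lt hi, hci]
  have hmaster' : ∀ a b, Estar A R a b → ∀ i j, i < n → j < n → c' i = a → c' j = b →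
      j = (i + 1) % n := by
    intro a b hab i j hi hj hci hcj
    have h := hmaster a b hab ((i₀ + 1 + i) % n) ((i₀ + 1 + j) % n)
      (Nat.mod_lt _ hn) (Nat.mod_lt _ hn) hci hcj
    have h1 : (i₀ + 1 + j) % n = (i₀ + 1 + i + 1) % n := by rw [h, Nat.mod_add_mod]
    have h2 : (i₀ + 1 + j) % n = (i₀ + 1 + (i + 1) % n) % n := by
      rw [h1, show i₀ + 1 + i + 1 = i₀ + 1 + (i + 1) from by omega, ← Nat.add_mod_mod]
    exact mod_cancel hj (Nat.mod_lt _ hn) h2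
  -- positions
  choose P hP using hsurj'
  have hPlt : ∀ x, P x < n := fun x => (hP x).1
  have hPc : ∀ x, c' (P x) = x := fun x => (hP x).2
  have hPofc : ∀ i, i < n → P (c' i) = i := fun i hi =>
    hinj' _ _ (hPlt _) hi (by rw [hPc])
  -- master in position form
  have mc : ∀ a b, Estar A R a b → P b = (P a + 1) % n := by
    intro a b h
    exact hmaster' a b h (P a) (P b) (hPlt a) (hPlt b) (hPc a) (hPc b)
  have mcsplit : ∀ a b, Estar A R a b →
      (P b = P a + 1 ∧ P a + 1 < n) ∨ (P a = n - 1 ∧ P b = 0) := by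
    intro a b h
    have h1 := mc a b h
    have h2 := hPlt a
    rcases Nat.lt_or_ge (P a + 1) n with hlt | hge
    · exact Or.inl ⟨by rw [h1, Nat.mod_eq_of_lt hlt], hlt⟩
    · refine Or.inr ⟨by omega, ?_⟩
      rw [h1, show P a + 1 = n from by omega, Nat.mod_self]
  -- identifications of the endpoints of the chosen step
  have hcr1 : c' (n - 1) = c i₀ := by
    show c ((i₀ + 1 + (n - 1)) % n) = c i₀
    rw [show i₀ + 1 + (n - 1) = i₀ + n from by omega, Nat.add_mod_right,
      Nat.mod_eq_of_lt hi₀]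
  have hcr0 : c' 0 = c (i₀ + 1) := by
    show c ((i₀ + 1 + 0) % n) = c (i₀ + 1)
    rcases Nat.lt_or_ge (i₀ + 1) n with hlt | hge
    · rw [Nat.add_zero, Nat.mod_eq_of_lt hlt]
    · rw [Nat.add_zero, show i₀ + 1 = n from by omega, Nat.mod_self, ← hcc]
  -- the chosen step: forward or reversed
  rcases hsc i₀ hi₀ with ⟨huvA, hnS⟩ | hRB
  · -- F-case: the underlying arc (u,v) is a forward arc
    set u := c i₀ with hudef
    set v := c (i₀ + 1) with hvdef
    have hcu' : c' (n - 1) = u := hcr1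
    have hcv' : c' 0 = v := hcr0
    have hPu : P u = n - 1 := by rw [← hcu']; exact hPofc _ (by omega)
    have hPv : P v = 0 := by rw [← hcv']; exact hPofc _ (by omega)
    have mcR : ∀ a b, R a b → P a = P b + 1 := by
      intro a b h
      rcases mcsplit b a (Or.inr h) with ⟨h1, _⟩ | ⟨h1, h2⟩
      · exact h1
      · exfalso
        have hbu : b = u := by rw [← hPc b, h1, hcu']
        have hav : a = v := by rw [← hPc a, h2, hcv']
        rw [hbu, hav] at h
        exact hA.2.1 (u, v) huvA (hR _ _ h)
    have covS : ∀ a b, Relation.TransGen R a b → P b < P a ∧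
        ∀ h, P b ≤ h → h < P a → R (c' (h + 1)) (c' h) := by
      intro a b hS
      induction hS with
      | @single b' h =>
        have h1 := mcR _ _ h
        refine ⟨by omega, ?_⟩
        intro h' hh1 hh2
        have hh : h' = P b' := by omega
        subst hh
        rw [show c' (P b' + 1) = a from by rw [← h1]; exact hPc a, hPc b']
        exact h
      | @tail b' b'' hab' hstep ih =>
        have h1 := mcR _ _ hstep
        refine ⟨by omega, ?_⟩
        intro h' hh1 hh2
        rcases Nat.lt_or_ge h' (P b') with hlt | hge
        · have hh : h' = P b'' := by omega
          subst hh
          rw [show c' (P b'' + 1) = b' from by rw [← h1]; exact hPc b', hPc b'']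
          exact hstep
        · exact ih.2 h' hge hh2
    obtain ⟨z, hz1, hz2⟩ := getwit u v huvA hnadj
    obtain ⟨m, W, hm2, hW0, hWm, hWs⟩ := witness_path hz1 hz2
    have hWtg := walk_transGen (r := ArcRel A) (w := W) (m := m) hWs
    have hWu : ∀ l, 0 < l → l ≤ m → W l ≠ u := by
      intro l h1 h2 heq
      have h3 := hWtg 0 l h1 h2
      rw [hW0, heq] at h3
      exact hAirr u h3
    have hWv : ∀ l, l < m → W l ≠ v := by
      intro l hl heq
      have h3 := hWtg l m hl le_rfl
      rw [hWm, heq] at h3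
      exact hAirr v h3
    have moveF : ∀ l, l < m → ¬ Relation.TransGen R (W l) (W (l + 1)) →
        P (W (l + 1)) = P (W l) + 1 := by
      intro l hl hnS'
      rcases mcsplit (W l) (W (l + 1)) (Or.inl ⟨hWs l hl, hnS'⟩) with ⟨h1, _⟩ | ⟨h1, h2⟩
      · exact h1
      · exfalso
        have hWlu : W l = u := by rw [← hPc (W l), h1, hcu']
        have hWlv : W (l + 1) = v := by rw [← hPc (W (l + 1)), h2, hcv']
        rcases Nat.eq_zero_or_pos l with rfl | hpos
        · exact hWv 1 (by omega) hWlv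
        · exact hWu l hpos (by omega) hWlu
    have inv : ∀ l, l ≤ m → ∀ h, P (W l) ≤ h → h ≤ n - 2 → R (c' (h + 1)) (c' h) := by
      intro l
      induction l with
      | zero =>
        intro _ h hh1 hh2
        rw [hW0, hPu] at hh1
        omega
      | succ l ih =>
        intro hl h hh1 hh2
        by_cases hS' : Relation.TransGen R (W l) (W (l + 1))
        · obtain ⟨hlt, hcov⟩ := covS _ _ hS'
          rcases Nat.lt_or_ge h (P (W l)) with hc1 | hc1
          · exact hcov h hh1 hc1
          · exact ih (by omega) h hc1 hh2
        · have hmv := moveF l (by omega) hS'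
          exact ih (by omega) h (by omega) hh2
    have final : ∀ k, k ≤ n - 2 → Relation.TransGen R (c' (k + 1)) (c' 0) := by
      intro k
      induction k with
      | zero => intro hk; exact Relation.TransGen.single (inv m le_rfl 0 (by rw [hWm, hPv]) hk)
      | succ k ih =>
        intro hk
        exact Relation.TransGen.head (inv m le_rfl (k + 1) (by rw [hWm, hPv]; omega) hk)
          (ih (by omega))
    have hSuv : Relation.TransGen R u v := by
      have hfin := final (n - 2) le_rfl
      rwa [show n - 2 + 1 = n - 1 from by omega, hcu', hcv'] at hfin
    exact hnS hSuv
  · -- B-case: the underlying arc (u,v) is a reversed arc of R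
    set u := c (i₀ + 1) with hudef
    set v := c i₀ with hvdef
    have huvA : (u, v) ∈ A := hR _ _ hRB
    have hcu' : c' 0 = u := hcr0
    have hcv' : c' (n - 1) = v := hcr1
    have hPu : P u = 0 := by rw [← hcu']; exact hPofc _ (by omega)
    have hPv : P v = n - 1 := by rw [← hcv']; exact hPofc _ (by omega)
    have mcf : ∀ a b, (a, b) ∈ A → ¬ Relation.TransGen R a b → P b = P a + 1 := by
      intro a b h1 h2
      rcases mcsplit a b (Or.inl ⟨h1, h2⟩) with ⟨hx, _⟩ | ⟨hx, hy⟩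
      · exact hx
      · exfalso
        have hav : a = v := by rw [← hPc a, hx, hcv']
        have hbu : b = u := by rw [← hPc b, hy, hcu']
        rw [hav, hbu] at h1
        exact hA.2.1 (u, v) huvA h1
    have mcR' : ∀ a b, R a b → P a = P b + 1 ∨ (a = u ∧ b = v) := by
      intro a b h
      rcases mcsplit b a (Or.inr h) with ⟨h1, _⟩ | ⟨h1, h2⟩
      · exact Or.inl h1
      · exact Or.inr ⟨by rw [← hPc a, h2, hcu'], by rw [← hPc b, h1, hcv']⟩
    have Bdesc : ∀ a b, Relation.TransGen R a b →
        (P b < P a ∧ ∀ h, P b ≤ h → h < P a → R (c' (h + 1)) (c' h)) ∨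
        (Relation.ReflTransGen (ArcRel A) a u ∧
          ∀ h, P b ≤ h → h < n - 1 → R (c' (h + 1)) (c' h)) := by
      intro a b hS
      induction hS with
      | @single b' h =>
        rcases mcR' _ _ h with h1 | ⟨h1, h2⟩
        · refine Or.inl ⟨by omega, ?_⟩
          intro h' hh1 hh2
          have hh : h' = P b' := by omega
          subst hh
          rw [show c' (P b' + 1) = a from by rw [← h1]; exact hPc a, hPc b']
          exact h
        · refine Or.inr ⟨by rw [h1], ?_⟩
          intro h' hh1 hh2
          rw [h2, hPv] at hh1
          omega
      | @tail b' b'' hab' hstep ih =>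
        rcases mcR' _ _ hstep with h1 | ⟨h1, h2⟩
        · have hsingle : ∀ h', h' = P b'' → R (c' (h' + 1)) (c' h') := by
            intro h' hh
            subst hh
            rw [show c' (P b'' + 1) = b' from by rw [← h1]; exact hPc b', hPc b'']
            exact hstep
          rcases ih with ⟨hlt, hcov⟩ | ⟨hrtg, hcov⟩
          · refine Or.inl ⟨by omega, ?_⟩
            intro h' hh1 hh2
            rcases Nat.lt_or_ge h' (P b') with hc1 | hc1
            · exact hsingle h' (by omega)
            · exact hcov h' hc1 hh2
          · refine Or.inr ⟨hrtg, ?_⟩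
            intro h' hh1 hh2
            rcases Nat.lt_or_ge h' (P b') with hc1 | hc1
            · exact hsingle h' (by omega)
            · exact hcov h' hc1 hh2
        · refine Or.inr ⟨?_, ?_⟩
          · rw [← h1]
            exact (hSA hab').to_reflTransGen
          · intro h' hh1 hh2
            rw [h2, hPv] at hh1
            omega
    have hnadjB : ¬ (undirectedGraph (transRed A)).Adj u v := fun h => hnadj h.symm
    obtain ⟨z, hz1, hz2⟩ := getwit u v huvA hnadjB
    obtain ⟨m, W, hm2, hW0, hWm, hWs⟩ := witness_path hz1 hz2
    have hWtg := walk_transGen (r := ArcRel A) (w := W) (m := m) hWs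
    have hWu : ∀ l, 0 < l → l ≤ m → W l ≠ u := by
      intro l h1 h2 heq
      have h3 := hWtg 0 l h1 h2
      rw [hW0, heq] at h3
      exact hAirr u h3
    have hWv : ∀ l, l < m → W l ≠ v := by
      intro l hl heq
      have h3 := hWtg l m hl le_rfl
      rw [hWm, heq] at h3
      exact hAirr v h3
    have moveB : ∀ l, 1 ≤ l → l < m → Relation.TransGen R (W l) (W (l + 1)) →
        P (W (l + 1)) < P (W l) := by
      intro l h1 h2 hS'
      rcases Bdesc _ _ hS' with ⟨hok, _⟩ | ⟨hrtg, _⟩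
      · exact hok
      · exfalso
        rcases Relation.reflTransGen_iff_eq_or_transGen.mp hrtg with heq | htg
        · exact hWu l h1 (by omega) heq.symm
        · have h3 := hWtg 0 l h1 (by omega)
          rw [hW0] at h3
          exact hAirr u (h3.trans htg)
    by_cases hS0 : Relation.TransGen R (W 0) (W 1)
    · have hcov0 : ∀ h, P (W 1) ≤ h → h < n - 1 → R (c' (h + 1)) (c' h) := by
        rcases Bdesc _ _ hS0 with ⟨hlt, _⟩ | ⟨_, hcov⟩
        · exfalso
          rw [hW0, hPu] at hlt
          omega
        · intro h hh1 hh2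
          exact hcov h hh1 hh2
      have hc1 : P (W 1) = n - 1 := by
        by_contra hne
        have hc1lt : P (W 1) < n - 1 := by have := hPlt (W 1); omega
        obtain ⟨l', hl', hle, hgt⟩ := first_exceed (p := fun t => P (W (1 + t)))
          (m := m - 1) (h := P (W 1)) le_rfl
          (by show P (W 1) < P (W (1 + (m - 1)))
              rw [show 1 + (m - 1) = m from by omega, hWm, hPv]
              omega)
        have hle' : P (W (1 + l')) ≤ P (W 1) := hle
        have hgt' : P (W (1 + l' + 1)) > P (W 1) := hgt
        by_cases hS' : Relation.TransGen R (W (1 + l')) (W (1 + l' + 1))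
        · have hlt := moveB (1 + l') (by omega) (by omega) hS'
          omega
        · have hasc := mcf _ _ (hWs (1 + l') (by omega)) hS'
          have hpl : P (W (1 + l')) = P (W 1) := by omega
          have hcv := hcov0 (P (W 1)) le_rfl hc1lt
          have e1 : c' (P (W 1)) = W (1 + l') := by rw [← hpl, hPc]
          have e2 : c' (P (W 1) + 1) = W (1 + l' + 1) := by rw [← hpl, ← hasc, hPc]
          have hbad : (W (1 + l' + 1), W (1 + l')) ∈ A := by
            rw [← e1, ← e2]
            exact hR _ _ hcv
          exact hA.2.1 (W (1 + l'), W (1 + l' + 1)) (hWs (1 + l') (by omega)) hbad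
      have hW1v : W 1 = v := by rw [← hPc (W 1), hc1, hcv']
      exact hWv 1 (by omega) hW1v
    · have allf : ∀ h, h < n - 1 → ((c' h, c' (h + 1)) ∈ A ∧
          ¬ Relation.TransGen R (c' h) (c' (h + 1))) := by
        intro h hh
        obtain ⟨l, hl, hle, hgt⟩ := first_exceed (p := fun t => P (W t)) (m := m) (h := h)
          (by show P (W 0) ≤ h
              rw [hW0, hPu]
              omega)
          (by show h < P (W m)
              rw [hWm, hPv]
              omega)
        have hle' : P (W l) ≤ h := hle
        have hgt' : h < P (W (l + 1)) := hgt
        by_cases hS' : Relation.TransGen R (W l) (W (l + 1))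
        · exfalso
          rcases Nat.eq_zero_or_pos l with rfl | hpos
          · exact hS0 hS'
          · have hlt := moveB l hpos hl hS'
            omega
        · have hasc := mcf _ _ (hWs l hl) hS'
          have hpl : P (W l) = h := by omega
          have e1 : c' h = W l := by rw [← hpl, hPc]
          have e2 : c' (h + 1) = W (l + 1) := by rw [← hpl, ← hasc, hPc]
          rw [e1, e2]
          exact ⟨hWs l hl, hS'⟩
      obtain ⟨B₀, hmemB, hsubB, hB₀A, hB₀acy⟩ := hHB u v hRB
      have hsteps : ∀ t, t < n - 1 → ArcRel (reorient A B₀) (c' t) (c' (t + 1)) := by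
        intro t ht
        obtain ⟨h1, h2⟩ := allf t ht
        exact Or.inl ⟨h1, fun hc => h2 (Relation.TransGen.single (hsubB _ hc))⟩
      have hpath := walk_transGen (r := ArcRel (reorient A B₀)) (w := c') (m := n - 1)
        hsteps 0 (n - 1) (by omega) le_rfl
      have hlaststep : ArcRel (reorient A B₀) (c' (n - 1)) (c' 0) := by
        rw [hcv', hcu']
        exact Or.inr ⟨(u, v), hmemB, rfl⟩
      exact hB₀acy (c' 0) (hpath.tail hlaststep)


end Spanning

section Core

universe u

lemma mod_eq_zero_bounds {x n : ℕ} (h1 : 0 < x) (h2 : x < 2 * n) (h : x % n = 0) : x = n := by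
  rcases Nat.lt_or_ge x n with hlt | hge
  · rw [Nat.mod_eq_of_lt hlt] at h
    omega
  · have e := Nat.mod_eq_sub_mod hge
    rw [e, Nat.mod_eq_of_lt (by omega)] at h
    omega

lemma coreAux : ∀ (N : ℕ) (V : Type u) [Fintype V] (A : Set (V × V)) (R : V → V → Prop),
    Fintype.card V ≤ N → IsDAG A → Vertebrate A →
    (∀ x y, R x y → (x, y) ∈ A) →
    (∀ u v, R u v → ∃ B₀ : Set (V × V), (u, v) ∈ B₀ ∧ (∀ p ∈ B₀, R p.1 p.2) ∧ ARmem A B₀) →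
    AcyclicArcs (reorient A (JSet A R)) := by
  intro N
  induction N with
  | zero =>
    intro V _ A R hcard _ _ _ _ v
    haveI : IsEmpty V := Fintype.card_eq_zero_iff.mp (by omega)
    exact (IsEmpty.false v).elim
  | succ N IH =>
    intro V instV A R hcard hA hV hR hHB v0 hv0
    have IH' : ∀ (V' : Type u) [Fintype V'] (A' : Set (V' × V')) (R' : V' → V' → Prop),
        Fintype.card V' < Fintype.card V → IsDAG A' → Vertebrate A' →
        (∀ x y, R' x y → (x, y) ∈ A') →
        (∀ u v, R' u v → ∃ B₀ : Set (V' × V'), (u, v) ∈ B₀ ∧ (∀ p ∈ B₀, R' p.1 p.2) ∧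
          ARmem A' B₀) →
        AcyclicArcs (reorient A' (JSet A' R')) := by
      intro V' _ A' R' hlt hA' hV' hR' hHB'
      exact IH V' A' R' (by omega) hA' hV' hR' hHB'
    have hcyc : Relation.TransGen (Estar A R) v0 v0 := by
      have h1 := Relation.TransGen.mono (fun a b hab => E_to_estar (A := A) (R := R) hab) _ _ hv0
      rwa [Relation.transGen_idem] at h1
    obtain ⟨n, hn, c, hsc, hcc, hinj⟩ := exists_simple_cycle hcyc
    have hestarirr := estar_irrefl hA hR
    have hn3 : 3 ≤ n := by
      by_contra hn3
      interval_cases n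
      · have h01 := hsc 0 (by omega)
        rw [show (0:ℕ) + 1 = 1 from rfl, hcc] at h01
        exact hestarirr (c 0) h01
      · have h01 := hsc 0 (by omega)
        have h12 := hsc 1 (by omega)
        rw [show (1:ℕ) + 1 = 2 from rfl, hcc] at h12
        rcases h01 with ⟨ha1, ha2⟩ | ha3 <;> rcases h12 with ⟨hb1, hb2⟩ | hb3
        · exact hA.2.1 (c 0, c 1) ha1 hb1
        · exact ha2 (Relation.TransGen.single hb3)
        · exact hb2 (Relation.TransGen.single ha3)
        · exact S_irrefl hA hR (c 0)
            ((Relation.TransGen.single hb3).trans (Relation.TransGen.single ha3))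
    by_cases hsurj : ∀ x : V, ∃ i, i < n ∧ c i = x
    · have hmaster : ∀ a b, Estar A R a b → ∀ i j, i < n → j < n → c i = a → c j = b →
          j = (i + 1) % n := by
        intro a b hab i j hi hj hci hcj
        by_contra hne
        have hij : i ≠ j := by
          intro heq
          subst heq
          have hba : a = b := by rw [← hci]; exact hcj
          rw [← hba] at hab
          exact hestarirr a hab
        set w := c ((i + 1) % n) with hwdef
        set t := (n + i - j) % n with htdef
        have ht2 : t < n := Nat.mod_lt _ (by omega)
        have ht1 : 1 ≤ t := by
          rcases Nat.eq_zero_or_pos t with h0 | h1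
          · exfalso
            have h5 : n + i - j = n := mod_eq_zero_bounds (by omega) (by omega) h0
            omega
          · exact h1
        have hgt : (j + t) % n = i := by
          rw [htdef, Nat.add_mod_mod, show j + (n + i - j) = n + i from by omega,
            Nat.add_mod_left, Nat.mod_eq_of_lt hi]
        have havoid : ∀ s, s ≤ t → c ((j + s) % n) ≠ w := by
          intro s hs heq
          have heq2 : (j + s) % n = (i + 1) % n :=
            hinj _ _ (Nat.mod_lt _ (by omega)) (Nat.mod_lt _ (by omega)) heq
          have h1 : (j + t + 1) % n = (i + 1) % n := by
            rw [← hgt, Nat.mod_add_mod]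
          have h2 : (j + s) % n = (j + (t + 1) % n) % n := by
            rw [heq2, ← h1, show j + t + 1 = j + (t + 1) from by omega, ← Nat.add_mod_mod]
          have h3 : s = (t + 1) % n := mod_cancel (by omega) (Nat.mod_lt _ (by omega)) h2
          rcases Nat.lt_or_ge (t + 1) n with hc1 | hc1
          · rw [Nat.mod_eq_of_lt hc1] at h3
            omega
          · have ht1' : t + 1 = n := by omega
            rw [ht1', Nat.mod_self] at h3
            subst h3
            rw [Nat.add_zero, Nat.mod_eq_of_lt hj] at heq2
            exact hne heq2
        set U : Set V := {x | x ≠ w} with hUdef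
        have havoid' : ∀ s : ℕ, (if s ≤ t then c ((j + s) % n) else c (j % n)) ≠ w := by
          intro s
          by_cases hs : s ≤ t
          · rw [if_pos hs]
            exact havoid s hs
          · rw [if_neg hs]
            have h0 := havoid 0 (by omega)
            rwa [Nat.add_zero] at h0
        set Wfun : ℕ → ↥U := fun s => ⟨if s ≤ t then c ((j + s) % n) else c (j % n),
          havoid' s⟩ with hWfun
        have hstepmod := cyc_step_mod hn hsc hcc
        have hrelstep : ∀ s, s < t + 1 → Estar A R ((Wfun s : V)) ((Wfun (s + 1) : V)) := by
          intro s hs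
          rcases Nat.lt_or_ge s t with hlt | hge
          · have e1 : (Wfun s : V) = c ((j + s) % n) := if_pos (by omega)
            have e2 : (Wfun (s + 1) : V) = c ((j + (s + 1)) % n) := if_pos (by omega)
            rw [e1, e2]
            exact hstepmod (j + s)
          · have hst : s = t := by omega
            have e1 : (Wfun s : V) = a := by
              have e0 : (Wfun s : V) = c ((j + s) % n) := if_pos (by omega)
              rw [e0, hst, hgt, hci]
            have e2 : (Wfun (s + 1) : V) = b := by
              have e0 : (Wfun (s + 1) : V) = c (j % n) := if_neg (by omega)
              rw [e0, Nat.mod_eq_of_lt hj, hcj]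
            rw [e1, e2]
            exact hab
        have hTG : Relation.TransGen (fun x y : ↥U => Estar A R ↑x ↑y) (Wfun 0) (Wfun 0) := by
          have h1 := walk_transGen (r := fun x y : ↥U => Estar A R ↑x ↑y) (w := Wfun)
            (m := t + 1) hrelstep 0 (t + 1) (by omega) le_rfl
          have h2 : Wfun (t + 1) = Wfun 0 := by
            apply Subtype.ext
            show (if t + 1 ≤ t then c ((j + (t + 1)) % n) else c (j % n))
              = (if 0 ≤ t then c ((j + 0) % n) else c (j % n))
            rw [if_neg (by omega), if_pos (by omega), Nat.add_zero]
          rwa [h2] at h1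
        exact restrict_step hA hV hR hHB U w (fun h => h rfl) IH' hTG
      exact spanning_contra hA hV hR hHB hn3 hsc hcc hinj hsurj hmaster
    · push_neg at hsurj
      obtain ⟨w, hw⟩ := hsurj
      set U : Set V := {x | x ≠ w} with hUdef
      have hmem : ∀ t : ℕ, c (t % n) ≠ w := fun t => hw _ (Nat.mod_lt _ hn)
      set Wfun : ℕ → ↥U := fun t => ⟨c (t % n), hmem t⟩ with hWfun
      have hstepmod := cyc_step_mod hn hsc hcc
      have hrelstep : ∀ t, t < n → Estar A R ((Wfun t : V)) ((Wfun (t + 1) : V)) :=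
        fun t _ => hstepmod t
      have hTG : Relation.TransGen (fun x y : ↥U => Estar A R ↑x ↑y) (Wfun 0) (Wfun 0) := by
        have h1 := walk_transGen (r := fun x y : ↥U => Estar A R ↑x ↑y) (w := Wfun)
          (m := n) hrelstep 0 n hn le_rfl
        have h2 : Wfun n = Wfun 0 := by
          apply Subtype.ext
          show c (n % n) = c (0 % n)
          rw [Nat.mod_self, Nat.zero_mod]
        rwa [h2] at h1
      exact restrict_step hA hV hR hHB U w (fun h => h rfl) IH' hTG

end Core

section Final

variable {V : Type*} [Fintype V]

lemma join_armem (A : Set (V × V)) (hA : IsDAG A) (hV : Vertebrate A) {k : ℕ}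
    (B : Fin k → ARP A) : ARmem A (joinSet A B) := by
  constructor
  · intro a ha
    exact ha.1
  · have hkey : AcyclicArcs
        (reorient A (JSet A (fun x y => ∃ i : Fin k, (x, y) ∈ (B i).1))) := by
      refine coreAux (Fintype.card V) V A _ le_rfl hA hV ?_ ?_
      · rintro x y ⟨i, hi⟩
        exact (B i).2.1 hi
      · rintro u v ⟨i, hi⟩
        exact ⟨(B i).1, hi, fun p hp => ⟨i, hp⟩, (B i).2⟩
    exact hkey

lemma join_isLUB (A : Set (V × V)) {k : ℕ} (B : Fin k → ARP A)
    (h : ARmem A (joinSet A B)) :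
    IsLUB (Set.range B) (⟨joinSet A B, h⟩ : ARP A) := by
  constructor
  · rintro x ⟨i, rfl⟩
    intro p hp
    exact ⟨(B i).2.1 hp, Relation.TransGen.single ⟨i, hp⟩⟩
  · rintro C hC
    intro p hp
    obtain ⟨hpA, hpS⟩ := hp
    by_contra hpc
    have hsub : ∀ x y, (∃ i : Fin k, (x, y) ∈ (B i).1) → (x, y) ∈ C.1 := by
      rintro x y ⟨i, hi⟩
      exact hC ⟨i, rfl⟩ hi
    have hrev : Relation.TransGen (ArcRel (reorient A C.1)) p.2 p.1 := by
      have h1 : Relation.TransGen (fun x y => (x, y) ∈ C.1) p.1 p.2 :=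
        Relation.TransGen.mono (fun x y hxy => hsub x y hxy) _ _ hpS
      have h2 : Relation.TransGen (Function.swap (fun x y => (x, y) ∈ C.1)) p.2 p.1 :=
        Relation.transGen_swap.mpr h1
      exact Relation.TransGen.mono (fun x y hxy => Or.inr ⟨(y, x), hxy, rfl⟩) _ _ h2
    have hfwd : ArcRel (reorient A C.1) p.1 p.2 := Or.inl ⟨hpA, hpc⟩
    exact C.2.2 p.1 (Relation.TransGen.head hfwd hrev)

def dualB (A : Set (V × V)) {k : ℕ} (B : Fin k → ARP A) : Fin k → ARP A :=
  fun i => ⟨A \ (B i).1, ARmem_compl (B i).2⟩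

lemma meet_eq (A : Set (V × V)) {k : ℕ} (B : Fin k → ARP A) :
    meetSet A B = A \ joinSet A (dualB A B) := rfl

lemma meet_armem (A : Set (V × V)) (hA : IsDAG A) (hV : Vertebrate A) {k : ℕ}
    (B : Fin k → ARP A) : ARmem A (meetSet A B) := by
  rw [meet_eq]
  exact ARmem_compl (join_armem A hA hV (dualB A B))

lemma meet_isGLB (A : Set (V × V)) (hA : IsDAG A) (hV : Vertebrate A) {k : ℕ}
    (B : Fin k → ARP A) (h : ARmem A (meetSet A B)) :
    IsGLB (Set.range B) (⟨meetSet A B, h⟩ : ARP A) := by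
  have hjoin := join_armem A hA hV (dualB A B)
  have hlub := join_isLUB A (dualB A B) hjoin
  constructor
  · rintro x ⟨i, rfl⟩
    intro p hp
    by_contra hpc
    apply hp.2
    have h1 : (dualB A B) i ≤ ⟨joinSet A (dualB A B), hjoin⟩ := hlub.1 ⟨i, rfl⟩
    exact h1 ⟨hp.1, hpc⟩
  · rintro C hC
    intro p hp
    have hpA : p ∈ A := C.2.1 hp
    refine ⟨hpA, ?_⟩
    intro hpJ
    have hC' : (⟨A \ C.1, ARmem_compl C.2⟩ : ARP A) ∈ upperBounds (Set.range (dualB A B)) := by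
      rintro x ⟨i, rfl⟩
      intro q hq
      exact ⟨hq.1, fun hqC => hq.2 (hC ⟨i, rfl⟩ hqC)⟩
    have h2 := hlub.2 hC'
    have h3 := h2 hpJ
    exact h3.2 hp

end Final

end Stmt3

/-- Explicit joins and meets in the acyclic reorientation lattice
of a vertebrate directed acyclic graph. -/
theorem stmt_3 {V : Type*} [Fintype V] (A : Set (V × V)) (hA : IsDAG A)
    (hV : Vertebrate A) (k : ℕ) (hk : 1 ≤ k) (B : Fin k → ARP A) :
    (∃ h : ARmem A (joinSet A B), IsLUB (Set.range B) ⟨joinSet A B, h⟩) ∧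
    (∃ h : ARmem A (meetSet A B), IsGLB (Set.range B) ⟨meetSet A B, h⟩) := by
  refine ⟨⟨Stmt3.join_armem A hA hV B, Stmt3.join_isLUB A B _⟩,
    ⟨Stmt3.meet_armem A hA hV B, Stmt3.meet_isGLB A hA hV B _⟩⟩
end

section
/- Let D = (V, A) and D' = (V, A') be directed acyclic graphs with A ⊇ A', let B' ∈ AR(D') with reoriented graph E', and set B = {(u,v) ∈ A : E' contains a directed path from v to u}. Then the following are equivalent: (i) B ∈ AR(D), i.e., the reoriented graph E_B is acyclic; (ii) the fiber ρ^{-1}(B') has a least element in AR(D); (iii) every directed cycle each of whose arcs is either an arc of E' or an arc of A ∖ A' contains at least one arc (u,v) ∈ A ∖ A' such that E' contains a directed path from v to u. Moreover, when these conditions hold, B is the least element of ρ^{-1}(B'). -/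
/-- The arcs of a cyclic sequence of vertices (consecutive pairs, with wrap-around). -/
def cycleArcs {V : Type*} (p : List V) : List (V × V) := p.zip (p.rotate 1)

/-- A directed cycle with arcs in `E`: a nonempty cyclic sequence of pairwise
distinct vertices all of whose (cyclically) consecutive pairs are arcs of `E`. -/
def IsDirCycle {V : Type*} (E : Set (V × V)) (p : List V) : Prop :=
  p ≠ [] ∧ p.Nodup ∧ ∀ a ∈ cycleArcs p, a ∈ E

/-- A simple cycle of the directed graph `A` together with a traversal direction:
a nonempty cyclic sequence of pairwise distinct vertices in which consecutive
vertices are joined by an arc of `A` in one direction or the other.  An arc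
`a ∈ cycleArcs p` is *forward* if `a ∈ A` and *backward* if `Prod.swap a ∈ A`. -/
def IsUCycle {V : Type*} (A : Set (V × V)) (p : List V) : Prop :=
  p ≠ [] ∧ p.Nodup ∧ ∀ a ∈ cycleArcs p, (a ∈ A ∨ Prod.swap a ∈ A)

/-- The candidate minimum of the fiber of `B'`: arcs `(u,v)` of `A` such that the
reorientation `E'` of `A'` contains a directed path from `v` to `u`. -/
def minFiberCand {V : Type*} (A A' B' : Set (V × V)) : Set (V × V) :=
  {a ∈ A | Relation.TransGen (ArcRel (reorient A' B')) a.2 a.1}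

namespace ARaux
variable {V : Type*}

lemma zipA : ∀ (l : List V) (hl : l ≠ []) (x : V),
    l.zip (l.tail ++ [x]) = l.zip l.tail ++ [(l.getLast hl, x)]
  | [a], _, x => by simp
  | a :: b :: t, _, x => by
    have ih := zipA (b :: t) (by simp) x
    simp only [List.tail_cons] at ih ⊢
    rw [List.cons_append, List.zip_cons_cons, ih, List.getLast_cons (by simp : (b:: t) ≠ [])]
    simp

lemma zipB : ∀ (l : List V) (hl : l ≠ []) (c : V),
    (l ++ [c]).zip (l.tail ++ [c]) = l.zip l.tail ++ [(l.getLast hl, c)]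
  | [a], _, c => by simp
  | a :: b :: t, _, c => by
    have ih := zipB (b :: t) (by simp) c
    simp only [List.tail_cons, List.cons_append] at ih ⊢
    rw [List.zip_cons_cons, ih,
      List.getLast_cons (by simp : (b:: t) ≠ [])]
    simp

lemma cycleArcs_cons (x : V) (t : List V) :
    cycleArcs (x :: t) = (x :: t).zip t ++ [((x :: t).getLast (by simp), x)] := by
  unfold cycleArcs
  rw [show (x :: t).rotate 1 = t ++ [x] by rw [List.rotate_cons_succ, List.rotate_zero]]
  exact zipA (x :: t) (by simp) x

lemma zip_tail_suffix : ∀ (l1 l2 : List V), ∀ a ∈ l2.zip l2.tail, a ∈ (l1 ++ l2).zip (l1 ++ l2).tail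
  | [], l2, a, ha => ha
  | b :: l1, l2, a, ha => by
    have ih := zip_tail_suffix l1 l2 a ha
    rw [List.cons_append]
    cases h : l1 ++ l2 with
    | nil => rw [h] at ih; simp at ih
    | cons c m =>
      rw [h] at ih
      simp only [List.tail_cons, List.zip_cons_cons]
      exact List.mem_cons_of_mem _ ih

end ARaux

namespace ARaux2
open ARaux Relation
variable {V : Type*}

lemma getLast_heq {l m : List V} (h : l = m) (hl : l ≠ []) (hm : m ≠ []) :
    l.getLast hl = m.getLast hm := by subst h; rfl

lemma chain_rtg {S : Set (V × V)} : ∀ (t : List V) (x : V),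
    (∀ a ∈ (x :: t).zip t, a ∈ S) →
    Relation.ReflTransGen (ArcRel S) x ((x :: t).getLast (by simp))
  | [], x, _ => by simp [Relation.ReflTransGen.refl]
  | b :: t, x, h => by
    have h1 : ArcRel S x b := h _ (by simp)
    have ih := chain_rtg t b (fun a ha => h a (by simp [List.zip_cons_cons, ha]))
    rw [List.getLast_cons (by simp : (b :: t) ≠ [])]
    exact Relation.ReflTransGen.head h1 ih

lemma dirCycle_to_transGen {S : Set (V × V)} {p : List V} (h : IsDirCycle S p) :
    ∃ v, Relation.TransGen (ArcRel S) v v := by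
  obtain ⟨hne, _, harcs⟩ := h
  obtain ⟨x, t, rfl⟩ := List.exists_cons_of_ne_nil hne
  rw [cycleArcs_cons] at harcs
  have hchain : ∀ a ∈ (x :: t).zip t, a ∈ S := fun a ha => harcs a (by simp [ha])
  have hwrap : ArcRel S ((x :: t).getLast (by simp)) x := harcs _ (by simp)
  exact ⟨x, Relation.TransGen.tail' (chain_rtg t x hchain) hwrap⟩

lemma transGen_to_cycle {S : Set (V × V)} {x y : V} (h : Relation.TransGen (ArcRel S) x y) :
    (∃ p, IsDirCycle S p) ∨
      ∃ t : List V, (x :: t).Nodup ∧ (x :: t).getLast (by simp) = y ∧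
        (∀ a ∈ (x :: t).zip t, a ∈ S) ∧ x ≠ y := by
  induction h with
  | single h =>
    rename_i b
    by_cases hxb : x = b
    · subst hxb
      refine Or.inl ⟨[x], by simp, by simp, ?_⟩
      intro a ha
      rw [cycleArcs_cons] at ha
      simp at ha
      subst ha; exact h
    · refine Or.inr ⟨[b], by simp [hxb], by simp, fun a ha => ?_, hxb⟩
      simp only [List.zip_cons_cons, List.zip_nil_right, List.mem_singleton] at ha
      subst ha; exact h
  | tail h1 h2 ih =>
    rename_i b c
    rcases ih with hcyc | ⟨t, hnd, hlast, harc, hne⟩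
    · exact Or.inl hcyc
    by_cases hc : c ∈ x :: t
    · -- extract a cycle
      obtain ⟨p1, p2, hp⟩ := List.append_of_mem hc
      refine Or.inl ⟨c :: p2, by simp, ?_, ?_⟩
      · have := hnd
        rw [hp] at this
        exact (List.sublist_append_right p1 (c :: p2)).nodup this
      · intro a ha
        rw [cycleArcs_cons] at ha
        rcases List.mem_append.mp ha with ha | ha
        · apply harc
          have := zip_tail_suffix p1 (c :: p2) a (by simpa using ha)
          rw [← hp] at this
          simpa using this
        · simp only [List.mem_singleton] at ha
          subst ha
          have hgl : (c :: p2).getLast (by simp) = b := by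
            rw [← List.getLast_append_right (l := p1) (by simp : c :: p2 ≠ []),
              ← getLast_heq hp (by simp) (by simp [hp.symm])]
            exact hlast
          rw [hgl]
          exact h2
    · -- extend the path
      refine Or.inr ⟨t ++ [c], ?_, ?_, ?_, fun hxc => hc (hxc ▸ List.mem_cons_self (a := x) (l := t))⟩
      · have : ((x :: t) ++ [c]).Nodup := by
          rw [List.nodup_append]
          exact ⟨hnd, by simp, by simp at hc ⊢; exact ⟨fun h => hc.1 h.symm, fun a ha h => hc.2 (h ▸ ha)⟩⟩
        exact this
      · exact (getLast_heq (rfl : x :: (t ++ [c]) = (x :: t) ++ [c]) (by simp) (by simp)).trans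
          (List.getLast_append_singleton (x :: t))
      · intro a ha
        have ha2 : a ∈ ((x :: t) ++ [c]).zip ((x :: t).tail ++ [c]) := ha
        rw [zipB (x :: t) (by simp) c] at ha2
        rcases List.mem_append.mp ha2 with ha | ha
        · exact harc a (by simpa using ha)
        · simp only [List.mem_singleton] at ha
          subst ha
          rw [hlast]
          exact h2

lemma transGen_self_to_cycle {S : Set (V × V)} {v : V}
    (h : Relation.TransGen (ArcRel S) v v) : ∃ p, IsDirCycle S p :=
  (transGen_to_cycle h).resolve_right (fun ⟨_, _, _, _, hne⟩ => hne rfl)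

end ARaux2

namespace ARaux3
open Relation
variable {V : Type*}

lemma transGen_or {R : V → V → Prop} {u w x y : V}
    (h : Relation.TransGen (fun a b => R a b ∨ (a = u ∧ b = w)) x y) :
    Relation.TransGen R x y ∨
      (Relation.ReflTransGen R x u ∧ Relation.ReflTransGen R w y) := by
  induction h with
  | single h =>
    rcases h with h | ⟨rfl, rfl⟩
    · exact Or.inl (TransGen.single h)
    · exact Or.inr ⟨ReflTransGen.refl, ReflTransGen.refl⟩
  | tail h1 h2 ih =>
    rcases h2 with h | ⟨rfl, rfl⟩
    · rcases ih with ih | ⟨ha, hb⟩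
      · exact Or.inl (ih.tail h)
      · exact Or.inr ⟨ha, hb.tail h⟩
    · rcases ih with ih | ⟨ha, _⟩
      · exact Or.inr ⟨ih.to_reflTransGen, ReflTransGen.refl⟩
      · exact Or.inr ⟨ha, ReflTransGen.refl⟩

lemma rtg_ne_tg {R : V → V → Prop} {x y : V} (h : Relation.ReflTransGen R x y)
    (hne : x ≠ y) : Relation.TransGen R x y := by
  rcases Relation.reflTransGen_iff_eq_or_transGen.mp h with rfl | h
  · exact absurd rfl hne
  · exact h

lemma exists_fiber_avoiding {A A' B' : Set (V × V)} (hA : IsDAG A) (hA' : IsDAG A')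
    (hsub : A' ⊆ A) (hB' : ARmem A' B') {a : V × V} (haA : a ∈ A)
    (hnp : ¬ Relation.TransGen (ArcRel (reorient A' B')) a.2 a.1) :
    ∃ C, ARmem A C ∧ C ∩ A' = B' ∧ a ∉ C := by
  set E' := reorient A' B' with hE'
  set R : V → V → Prop := fun u w => ArcRel E' u w ∨ (u = a.1 ∧ w = a.2) with hR
  have hane : a.1 ≠ a.2 := hA.1 a haA
  have hRacyc : ∀ v, ¬ Relation.TransGen R v v := by
    intro v hv
    rcases transGen_or hv with h | ⟨h1, h2⟩
    · exact hB'.2 v h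
    · exact hnp (rtg_ne_tg (h2.trans h1) (fun h => hane h.symm))
  letI inst : IsPartialOrder V (Relation.ReflTransGen R) := {
    refl := fun _ => ReflTransGen.refl
    trans := fun _ _ _ h1 h2 => h1.trans h2
    antisymm := fun u w h1 h2 => by
      rcases Relation.reflTransGen_iff_eq_or_transGen.mp h2 with rfl | h2'
      · rfl
      · exact absurd (h2'.trans_left h1) (hRacyc w) }
  obtain ⟨s, hs, hrs⟩ := extend_partialOrder (Relation.ReflTransGen R)
  haveI := hs.toIsPartialOrder
  haveI := hs.toTotal
  have hRs : ∀ u w, R u w → s u w := fun u w h => hrs u w (ReflTransGen.single h)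
  set C : Set (V × V) := {e ∈ A | ¬ s e.1 e.2} with hCdef
  have hstrict : ∀ e ∈ reorient A C, s e.1 e.2 ∧ e.1 ≠ e.2 := by
    rintro e (⟨heA, heC⟩ | ⟨f, hf, rfl⟩)
    · exact ⟨not_not.mp (fun h => heC ⟨heA, h⟩), hA.1 e heA⟩
    · obtain ⟨hfA, hfs⟩ := hf
      refine ⟨(Std.Total.total f.1 f.2).resolve_left hfs, ?_⟩
      exact fun h => hA.1 f hfA h.symm
  have hCacyc : AcyclicArcs (reorient A C) := by
    have key : ∀ x y, Relation.TransGen (ArcRel (reorient A C)) x y → s x y ∧ x ≠ y := by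
      intro x y h
      induction h with
      | single h => exact hstrict _ h
      | tail h1 h2 ih =>
        have h2' := hstrict _ h2
        refine ⟨IsTrans.trans _ _ _ ih.1 h2'.1, fun hxy => ?_⟩
        exact h2'.2 (Std.Antisymm.antisymm _ _ h2'.1 (hxy ▸ ih.1))
    exact fun v hv => (key v v hv).2 rfl
  have haC : a ∉ C := fun h => h.2 (hRs a.1 a.2 (Or.inr ⟨rfl, rfl⟩))
  have hCA' : C ∩ A' = B' := by
    ext e
    constructor
    · rintro ⟨⟨heA, hes⟩, heA'⟩
      by_contra heB'
      refine hes (hRs e.1 e.2 (Or.inl ?_))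
      show (e.1, e.2) ∈ E'
      rw [Prod.mk.eta]
      exact Or.inl ⟨heA', heB'⟩
    · intro heB'
      have h1 : s e.2 e.1 := hRs e.2 e.1 (Or.inl (Or.inr ⟨e, heB', rfl⟩))
      refine ⟨⟨hsub (hB'.1 heB'), fun h2 => ?_⟩, hB'.1 heB'⟩
      exact hA'.1 e (hB'.1 heB') (Std.Antisymm.antisymm _ _ h2 h1)
  exact ⟨C, ⟨fun e he => he.1, hCacyc⟩, hCA', haC⟩

end ARaux3

namespace ARaux4
open Relation ARaux2 ARaux3
variable {V : Type*}

lemma cand_inter {A A' B' : Set (V × V)} (hsub : A' ⊆ A) (hB' : ARmem A' B') :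
    minFiberCand A A' B' ∩ A' = B' := by
  ext e
  constructor
  · rintro ⟨⟨heA, hpath⟩, heA'⟩
    by_contra heB'
    refine hB'.2 e.1 (hpath.head ?_)
    show (e.1, e.2) ∈ reorient A' B'
    rw [Prod.mk.eta]
    exact Or.inl ⟨heA', heB'⟩
  · intro heB'
    exact ⟨⟨hsub (hB'.1 heB'), TransGen.single (Or.inr ⟨e, heB', rfl⟩)⟩, hB'.1 heB'⟩

lemma fiber_contains_cand {A A' B' : Set (V × V)} (hsub : A' ⊆ A) (hB'sub : B' ⊆ A')
    {C : Set (V × V)} (hC : ARmem A C) (hCA' : C ∩ A' = B') : minFiberCand A A' B' ⊆ C := by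
  rintro a ⟨haA, hpath⟩
  have hE' : ∀ u w, ArcRel (reorient A' B') u w → ArcRel (reorient A C) u w := by
    rintro u w (⟨heA', heB'⟩ | ⟨b, hb, hbe⟩)
    · refine Or.inl ⟨hsub heA', fun heC => heB' ?_⟩
      rw [← hCA']
      exact ⟨heC, heA'⟩
    · have hbC : b ∈ C := (hCA' ▸ hb : b ∈ C ∩ A').1
      exact Or.inr ⟨b, hbC, hbe⟩
  by_contra haC
  exact hC.2 a.1 ((TransGen.mono hE' _ _ hpath).head (Or.inl ⟨haA, haC⟩))

end ARaux4

open Relation ARaux2 ARaux3 ARaux4 in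
/-- Characterization of the fibers of the restriction map
admitting a least element. -/
theorem stmt_4 {V : Type*} [Fintype V] (A A' : Set (V × V)) (hA : IsDAG A)
    (hA' : IsDAG A') (hsub : A' ⊆ A) (B' : Set (V × V)) (hB' : ARmem A' B') :
    ((ARmem A (minFiberCand A A' B') ↔
        ∃ M, (ARmem A M ∧ M ∩ A' = B') ∧
          ∀ C, ARmem A C → C ∩ A' = B' → M ⊆ C) ∧
      (ARmem A (minFiberCand A A' B') ↔
        ∀ p : List V, IsDirCycle (reorient A' B' ∪ (A \ A')) p →
          ∃ a ∈ cycleArcs p, a ∈ A \ A' ∧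
            Relation.TransGen (ArcRel (reorient A' B')) a.2 a.1)) ∧
    (ARmem A (minFiberCand A A' B') →
      minFiberCand A A' B' ∩ A' = B' ∧
        ∀ C, ARmem A C → C ∩ A' = B' → minFiberCand A A' B' ⊆ C) := by
  set E' := reorient A' B' with hE'def
  set B := minFiberCand A A' B' with hBdef
  have hBsubA : B ⊆ A := fun e he => he.1
  have hFA : B ∩ A' = B' := cand_inter hsub hB'
  have hFB : ∀ C, ARmem A C → C ∩ A' = B' → B ⊆ C :=
    fun C hC hCA' => fiber_contains_cand hsub hB'.1 hC hCA'
  have hB'B : B' ⊆ B := fun b hb => (hFA ▸ hb : b ∈ B ∩ A').1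
  -- arcs of E' that lie in A lie in A'
  have hE'A : ∀ e ∈ E', e ∈ A → e ∈ A' := by
    rintro e (⟨h, _⟩ | ⟨b, hb, rfl⟩) heA
    · exact h
    · exact absurd (hsub (hB'.1 hb)) (by simpa using hA.2.1 _ heA)
  have hiii : ARmem A B ↔
      ∀ p : List V, IsDirCycle (E' ∪ (A \ A')) p →
        ∃ a ∈ cycleArcs p, a ∈ A \ A' ∧ Relation.TransGen (ArcRel E') a.2 a.1 := by
    constructor
    · intro hi p hp
      by_contra hno
      push_neg at hno
      have harcs : ∀ a ∈ cycleArcs p, a ∈ reorient A B := by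
        intro a ha
        rcases hp.2.2 a ha with hE | hAA'
        · rcases hE with ⟨haA', haB'⟩ | ⟨b, hb, rfl⟩
          · exact Or.inl ⟨hsub haA', fun hB => haB' (hFA ▸ (⟨hB, haA'⟩ : a ∈ B ∩ A'))⟩
          · exact Or.inr ⟨b, hB'B hb, rfl⟩
        · refine Or.inl ⟨hAA'.1, fun hB => hno a ha hAA' ?_⟩
          exact hB.2
      obtain ⟨v, hv⟩ := dirCycle_to_transGen ⟨hp.1, hp.2.1, harcs⟩
      exact hi.2 v hv
    · intro h3
      refine ⟨hBsubA, fun v hv => ?_⟩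
      set S : Set (V × V) := E' ∪ ((A \ A') \ B) with hSdef
      have hstep : ∀ x y, ArcRel (reorient A B) x y → Relation.TransGen (ArcRel S) x y := by
        rintro x y (⟨hxyA, hxyB⟩ | ⟨b, hb, hswap⟩)
        · by_cases h' : (x, y) ∈ A'
          · refine TransGen.single (Or.inl (Or.inl ⟨h', fun hB'xy => hxyB (hB'B hB'xy)⟩))
          · exact TransGen.single (Or.inr ⟨⟨hxyA, h'⟩, hxyB⟩)
        · obtain ⟨hx, hy⟩ := Prod.mk.injEq .. ▸ hswap
          subst hx; subst hy
          exact TransGen.mono (fun u w h => Or.inl h) _ _ hb.2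
      have lift : ∀ x y, Relation.TransGen (ArcRel (reorient A B)) x y →
          Relation.TransGen (ArcRel S) x y := by
        intro x y h
        induction h with
        | single h => exact hstep _ _ h
        | tail h1 h2 ih => exact ih.trans (hstep _ _ h2)
      have hvv : Relation.TransGen (ArcRel S) v v := lift v v hv
      obtain ⟨p, hpne, hpnd, hparcs⟩ := transGen_self_to_cycle hvv
      have hpF : IsDirCycle (E' ∪ (A \ A')) p :=
        ⟨hpne, hpnd, fun a ha => (hparcs a ha).elim Or.inl (fun h => Or.inr h.1)⟩
      obtain ⟨a, ha, haAA', hapath⟩ := h3 p hpF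
      rcases hparcs a ha with hE | hD
      · exact haAA'.2 (hE'A a hE haAA'.1)
      · exact hD.2 ⟨haAA'.1, hapath⟩
  have hii : ARmem A B ↔
      ∃ M, (ARmem A M ∧ M ∩ A' = B') ∧ ∀ C, ARmem A C → C ∩ A' = B' → M ⊆ C := by
    constructor
    · intro hi
      exact ⟨B, ⟨hi, hFA⟩, hFB⟩
    · rintro ⟨M, ⟨hM, hMA'⟩, hMleast⟩
      have hMB : M = B := by
        apply Set.Subset.antisymm
        · intro a haM
          by_contra haB
          obtain ⟨C, hC, hCA', haC⟩ := exists_fiber_avoiding hA hA' hsub hB' (hM.1 haM)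
            (fun h => haB ⟨hM.1 haM, h⟩)
          exact haC (hMleast C hC hCA' haM)
        · exact hFB M hM hMA'
      rwa [← hMB]
  exact ⟨⟨hii, hiii⟩, fun _ => ⟨hFA, hFB⟩⟩
end

section
/- Let D = (V, A) and D' = (V, A') be directed acyclic graphs with A ⊇ A'. The restriction map ρ restricts to a poset isomorphism from a lower interval of AR(D) (a set of the form {B ∈ AR(D) : B ⊆ M} for some M ∈ AR(D)) onto AR(D') if and only if D' is strongly balanced in D, i.e., for every simple cycle C of D (with either traversal direction), if all backward arcs of C belong to A', then all forward arcs of C belong to A'. -/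
/-- `A'` is strongly balanced in `A`: along any simple cycle whose backward arcs
all belong to `A'`, all forward arcs belong to `A'`. -/
def StronglyBalanced {V : Type*} (A A' : Set (V × V)) : Prop :=
  ∀ p : List V, IsUCycle A p →
    (∀ a ∈ cycleArcs p, Prod.swap a ∈ A → Prod.swap a ∈ A') →
    ∀ a ∈ cycleArcs p, a ∈ A → a ∈ A'

namespace Stmt7Aux
open Relation

variable {V : Type*}

lemma mem_swap_image {S : Set (V × V)} {a : V × V} : a ∈ Prod.swap '' S ↔ a.swap ∈ S := by
  constructor
  · rintro ⟨b, hb, rfl⟩; simpa using hb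
  · intro h; exact ⟨a.swap, h, by simp⟩

lemma acyclic_mono {E E' : Set (V × V)} (h : E' ⊆ E) (hE : AcyclicArcs E) : AcyclicArcs E' :=
  fun v hv => hE v (TransGen.mono (r := ArcRel E') (fun x y hxy => h hxy) _ _ hv)

lemma reorient_empty (A : Set (V × V)) : reorient A ∅ = A := by simp [reorient]

lemma reorient_self (A : Set (V × V)) : reorient A A = Prod.swap '' A := by simp [reorient]

lemma acyclic_swap {E : Set (V × V)} (hE : AcyclicArcs E) : AcyclicArcs (Prod.swap '' E) := by
  intro v hv
  have h1 : Relation.TransGen (fun x y => ArcRel E y x) v v :=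
    TransGen.mono (r := ArcRel (Prod.swap '' E)) (fun x y h => show ArcRel E y x from mem_swap_image.1 h) _ _ hv
  exact hE v h1.swap

lemma rtg_split {E'' E : Set (V × V)} (h : E'' ⊆ E) {a b : V}
    (hab : ReflTransGen (ArcRel E) a b) :
    ReflTransGen (ArcRel E'') a b ∨
      ∃ z : V × V, z ∈ E ∧ z ∉ E'' ∧ ReflTransGen (ArcRel E) a z.1 ∧
        ReflTransGen (ArcRel E) z.2 b := by
  induction hab using ReflTransGen.head_induction_on with
  | refl => exact .inl .refl
  | @head a c h' hcb ih =>
    by_cases hm : (a, c) ∈ E''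
    · rcases ih with h1 | ⟨z, hz, hz2, hz3, hz4⟩
      · exact .inl (ReflTransGen.head hm h1)
      · exact .inr ⟨z, hz, hz2, ReflTransGen.head h' hz3, hz4⟩
    · exact .inr ⟨(a, c), h', hm, .refl, hcb⟩

lemma tg_split {E' E : Set (V × V)} (h : E' ⊆ E) {w : V}
    (hw : TransGen (ArcRel E) w w) :
    TransGen (ArcRel E') w w ∨
      ∃ z : V × V, z ∈ E ∧ z ∉ E' ∧ ReflTransGen (ArcRel E) z.2 z.1 := by
  obtain ⟨c, hwc, hcw⟩ := TransGen.head'_iff.1 hw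
  rcases rtg_split h hcw with h1 | ⟨z, hz, hz2, hz3, hz4⟩
  · by_cases hm : (w, c) ∈ E'
    · exact .inl (TransGen.head' hm h1)
    · exact .inr ⟨(w, c), hwc, hm, ReflTransGen.mono (r := ArcRel E') (fun x y hxy => h hxy) _ _ h1⟩
  · exact .inr ⟨z, hz, hz2, hz4.trans (ReflTransGen.head hwc hz3)⟩

lemma rtg_elim_e {E' : Set (V × V)} {e : V × V} {a b : V}
    (hab : ReflTransGen (ArcRel (E' ∪ {e})) a b) :
    ReflTransGen (ArcRel E') a b ∨
      (ReflTransGen (ArcRel E') a e.1 ∧ ReflTransGen (ArcRel (E' ∪ {e})) e.2 b) := by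
  induction hab using ReflTransGen.head_induction_on with
  | refl => exact .inl .refl
  | @head a c h' hcb ih =>
    rcases h' with hE' | he
    · rcases ih with h1 | ⟨h1, h2⟩
      · exact .inl (ReflTransGen.head hE' h1)
      · exact .inr ⟨ReflTransGen.head hE' h1, h2⟩
    · have he' : (a, c) = e := he
      subst he'
      exact .inr ⟨.refl, hcb⟩

lemma force_walk {E' : Set (V × V)} {e : V × V} (hE' : AcyclicArcs E') {w : V}
    (hw : TransGen (ArcRel (E' ∪ {e})) w w) : ReflTransGen (ArcRel E') e.2 e.1 := by
  obtain ⟨c, hwc, hcw⟩ := TransGen.head'_iff.1 hw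
  rcases rtg_elim_e hcw with h1 | ⟨h1, h2⟩
  · rcases hwc with hin | he
    · exact absurd (TransGen.head' hin h1) (hE' w)
    · have he' : (w, c) = e := he
      subst he'
      exact h1
  · rcases rtg_elim_e h2 with h3 | ⟨h3, _⟩
    · rcases hwc with hin | he
      · exact (h3.tail hin).trans h1
      · have he' : (w, c) = e := he
        subst he'
        exact h3
    · exact h3


-- NEW MATERIAL
noncomputable def pc (E : Set (V × V)) (x : V) : ℕ :=
  {s | ReflTransGen (ArcRel E) s x}.ncard

lemma pc_strict [Fintype V] {E : Set (V × V)} (hE : AcyclicArcs E) {x y : V}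
    (hxy : (x, y) ∈ E) : pc E x < pc E y := by
  apply Set.ncard_lt_ncard _ (Set.toFinite _)
  have hsub : {s | ReflTransGen (ArcRel E) s x} ⊆ {s | ReflTransGen (ArcRel E) s y} :=
    fun s hs => ReflTransGen.tail hs hxy
  refine (Set.ssubset_iff_of_subset hsub).2
    ⟨y, ReflTransGen.refl, fun hyx => hE y (TransGen.tail' hyx hxy)⟩

lemma pc_mono [Fintype V] {E : Set (V × V)} (hE : AcyclicArcs E) {a b : V}
    (h : ReflTransGen (ArcRel E) a b) : pc E a ≤ pc E b := by
  induction h with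
  | refl => exact le_rfl
  | tail _ h2 ih => exact le_trans ih (pc_strict hE h2).le

lemma pc_eq_of_rtg [Fintype V] {E : Set (V × V)} (hE : AcyclicArcs E) {a b : V}
    (h : ReflTransGen (ArcRel E) a b) (heq : pc E a = pc E b) : a = b := by
  rcases h.cases_head with rfl | ⟨c, hac, hcb⟩
  · rfl
  · have := lt_of_lt_of_le (pc_strict hE hac) (pc_mono hE hcb)
    omega

lemma reorient_diff_singleton {X C : Set (V × V)} (hX2 : ∀ b ∈ X, Prod.swap b ∉ X)
    (hCX : C ⊆ X) {a : V × V} (ha : a ∈ C) :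
    reorient X (C \ {a}) = (reorient X C \ {a.swap}) ∪ {a} := by
  have haX : a ∈ X := hCX ha
  have hsX : a.swap ∉ X := hX2 a haX
  ext z
  simp only [reorient, Set.mem_union, Set.mem_diff, Set.mem_singleton_iff, mem_swap_image]
  have h1 : z = a.swap → z ∉ X := fun h => h ▸ hsX
  have h2 : z.swap = a ↔ z = a.swap := by
    constructor
    · intro h; rw [← h]; simp
    · intro h; rw [h]; simp
  have h3 : z = a → z ∈ X := fun h => h ▸ haX
  have h4 : z = a → z ∈ C := fun h => h ▸ ha
  by_cases hza : z = a <;> by_cases hzas : z = a.swap <;> tauto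

lemma penultimate [Fintype V] {X B C : Set (V × V)}
    (hX2 : ∀ b ∈ X, Prod.swap b ∉ X) (hBC : B ⊆ C) (hCX : C ⊆ X)
    (hB : AcyclicArcs (reorient X B)) (hC : AcyclicArcs (reorient X C)) (hne : B ≠ C) :
    ∃ a ∈ C \ B, AcyclicArcs (reorient X (C \ {a})) := by
  classical
  have hSne : (C \ B).Nonempty := by
    rw [Set.diff_nonempty]
    exact fun h => hne (subset_antisymm hBC h)
  set lam : V → ℕ := pc (reorient X C) with hlamdef
  obtain ⟨a, haS, hmin⟩ :=
    Set.exists_min_image (C \ B) (fun b => lam b.1 - lam b.2) (Set.toFinite _) hSne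
  have hswapmem : ∀ b ∈ C, b.swap ∈ reorient X C := fun b hb =>
    Or.inr (mem_swap_image.2 (by simpa using hb))
  have hstr : ∀ {b : V × V}, b ∈ reorient X C → lam b.1 < lam b.2 := fun hb =>
    pc_strict hC hb
  have hlt : lam a.2 < lam a.1 := hstr (hswapmem a haS.1)
  refine ⟨a, haS, ?_⟩
  by_contra hcyc
  simp only [AcyclicArcs, not_forall, not_not] at hcyc
  obtain ⟨w, hw⟩ := hcyc
  rw [reorient_diff_singleton hX2 hCX haS.1] at hw
  have hE'acy : AcyclicArcs (reorient X C \ {a.swap}) := acyclic_mono Set.diff_subset hC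
  have hqp : ReflTransGen (ArcRel (reorient X C \ {a.swap})) a.2 a.1 := force_walk hE'acy hw
  -- split off flipped arcs
  have hsubB : (reorient X C \ {a.swap}) \ (Prod.swap '' (C \ B)) ⊆ reorient X B := by
    rintro z ⟨⟨hz1, _⟩, hz3⟩
    rcases hz1 with ⟨hzX, hzC⟩ | hzsw
    · exact Or.inl ⟨hzX, fun h => hzC (hBC h)⟩
    · have hzC : z.swap ∈ C := mem_swap_image.1 hzsw
      have : z.swap ∈ B := by
        by_contra hzB
        exact hz3 (mem_swap_image.2 ⟨hzC, hzB⟩)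
      exact Or.inr (mem_swap_image.2 this)
  rcases rtg_split (Set.diff_subset) hqp with h1 | ⟨z, hz, hz2, hz3, hz4⟩
  · have h1' : ReflTransGen (ArcRel (reorient X B)) a.2 a.1 :=
      ReflTransGen.mono (r := ArcRel ((reorient X C \ {a.swap}) \ (Prod.swap '' (C \ B)))) (fun _ _ hxy => hsubB hxy) _ _ h1
    have harcB : (a.1, a.2) ∈ reorient X B := Or.inl ⟨hCX haS.1, fun h => haS.2 h⟩
    exact hB a.2 (TransGen.tail' h1' harcB)
  · -- z ∈ E', z ∈ swap '' (C \ B)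
    have hzsw : z ∈ Prod.swap '' (C \ B) := by
      by_contra hno
      exact hz2 ⟨hz, hno⟩
    have hzS : z.swap ∈ C \ B := mem_swap_image.1 hzsw
    have hzE : z ∈ reorient X C := hz.1
    have hc1 : lam a.2 ≤ lam z.1 := pc_mono hC (ReflTransGen.mono (r := ArcRel (reorient X C \ {a.swap})) (fun _ _ h => (Set.diff_subset h)) _ _ hz3)
    have hc2 : lam z.1 < lam z.2 := hstr hzE
    have hc3 : lam z.2 ≤ lam a.1 := pc_mono hC (ReflTransGen.mono (r := ArcRel (reorient X C \ {a.swap})) (fun _ _ h => (Set.diff_subset h)) _ _ hz4)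
    have hminz := hmin z.swap hzS
    simp only [Prod.fst_swap, Prod.snd_swap] at hminz
    have he1 : lam a.2 = lam z.1 ∧ lam z.2 = lam a.1 := by omega
    have heq1 : a.2 = z.1 :=
      pc_eq_of_rtg hC (ReflTransGen.mono (r := ArcRel (reorient X C \ {a.swap})) (fun _ _ h => (Set.diff_subset h)) _ _ hz3) he1.1
    have heq2 : z.2 = a.1 :=
      pc_eq_of_rtg hC (ReflTransGen.mono (r := ArcRel (reorient X C \ {a.swap})) (fun _ _ h => (Set.diff_subset h)) _ _ hz4) he1.2
    have : z = a.swap := by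
      have : z = (z.1, z.2) := rfl
      rw [Prod.ext_iff]
      constructor
      · simpa using heq1.symm
      · simpa using heq2
    exact hz.2 this


lemma mem_pairs_cons {m : List V} {x : V} {pr : V × V} (h : pr ∈ m.zip m.tail) :
    pr ∈ (x :: m).zip m := by
  cases m with
  | nil => simp at h
  | cons y t => rw [List.zip_cons_cons]; exact List.mem_cons_of_mem _ h

lemma pairs_suffix (s : List V) {r : List V} {pr : V × V} (h : pr ∈ r.zip r.tail) :
    pr ∈ (s ++ r).zip (s ++ r).tail := by
  induction s with
  | nil => simpa using h
  | cons x s' ih =>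
    have : (x :: (s' ++ r)).tail = s' ++ r := rfl
    simpa using mem_pairs_cons ih

lemma reach_head {E : Set (V × V)} :
    ∀ (l : List V), (∀ pr ∈ l.zip l.tail, pr ∈ E) → ∀ x ∈ l, ∀ (hl : l ≠ []),
      ReflTransGen (ArcRel E) (l.head hl) x := by
  intro l
  induction l with
  | nil => simp
  | cons a m ih =>
    intro hp x hx _
    rcases List.mem_cons.1 hx with rfl | hx'
    · exact .refl
    · have hm : m ≠ [] := List.ne_nil_of_mem hx'
      obtain ⟨y, t, rfl⟩ := List.exists_cons_of_ne_nil hm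
      have harc : (a, y) ∈ E := hp _ (by simp [List.zip_cons_cons])
      have h2 := ih (fun pr hpr => hp pr (mem_pairs_cons hpr)) x hx' hm
      exact ReflTransGen.head harc h2

lemma reach_last {E : Set (V × V)} :
    ∀ (l : List V), (∀ pr ∈ l.zip l.tail, pr ∈ E) → ∀ x ∈ l, ∀ (hl : l ≠ []),
      ReflTransGen (ArcRel E) x (l.getLast hl) := by
  intro l
  induction l with
  | nil => simp
  | cons a m ih =>
    intro hp x hx _
    by_cases hm : m = []
    · subst hm
      simp only [List.mem_singleton] at hx
      subst hx
      exact .refl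
    · obtain ⟨y, t, rfl⟩ := List.exists_cons_of_ne_nil hm
      have harc : (a, y) ∈ E := hp _ (by simp [List.zip_cons_cons])
      have hp' : ∀ pr ∈ (y :: t).zip (y :: t).tail, pr ∈ E :=
        fun pr hpr => hp pr (mem_pairs_cons hpr)
      rw [List.getLast_cons hm]
      rcases List.mem_cons.1 hx with rfl | hx'
      · exact ReflTransGen.head harc (ih hp' y (by simp) hm)
      · exact ih hp' x hx' hm

lemma zip_tail_append :
    ∀ (l : List V) (hl : l ≠ []) (x : V),
      l.zip (l.tail ++ [x]) = l.zip l.tail ++ [(l.getLast hl, x)] := by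
  intro l
  induction l with
  | nil => simp
  | cons a m ih =>
    intro _ x
    cases m with
    | nil => simp
    | cons b t =>
      have h := ih (by simp) x
      simp only [List.tail_cons, List.zip_cons_cons] at *
      rw [List.getLast_cons (by simp : (b :: t) ≠ [])]
      rw [show (b :: t) ++ [x] = b :: (t ++ [x]) from rfl]
      rw [List.zip_cons_cons]
      rw [h]
      simp

lemma cycleArcs_eq (l : List V) (hl : l ≠ []) :
    cycleArcs l = l.zip l.tail ++ [(l.getLast hl, l.head hl)] := by
  obtain ⟨a, m, rfl⟩ := List.exists_cons_of_ne_nil hl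
  show (a :: m).zip ((a :: m).rotate 1) = _
  rw [List.rotate_cons_succ, List.rotate_zero]
  exact zip_tail_append (a :: m) hl a

lemma path_extract {E : Set (V × V)} {a b : V} (h : ReflTransGen (ArcRel E) a b) :
    ∃ (l : List V) (hl : l ≠ []), l.Nodup ∧ l.head hl = a ∧ l.getLast hl = b ∧
      ∀ pr ∈ l.zip l.tail, pr ∈ E := by
  induction h using ReflTransGen.head_induction_on with
  | refl => exact ⟨[b], by simp, by simp, rfl, rfl, by simp⟩
  | @head a c h' _ ih =>
    obtain ⟨l, hl, hnd, hhead, hlast, hp⟩ := ih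
    by_cases ha : a ∈ l
    · obtain ⟨s, t, rfl⟩ := List.append_of_mem ha
      refine ⟨a :: t, by simp, ?_, rfl, ?_, ?_⟩
      · exact hnd.sublist (List.sublist_append_right s (a :: t))
      · rw [List.getLast_append] at hlast
        simpa using hlast
      · intro pr hpr
        exact hp pr (pairs_suffix s hpr)
    · refine ⟨a :: l, by simp, by simp [hnd, ha], rfl, ?_, ?_⟩
      · rw [List.getLast_cons hl]; exact hlast
      · intro pr hpr
        obtain ⟨y, m, rfl⟩ := List.exists_cons_of_ne_nil hl
        simp only [List.tail_cons, List.zip_cons_cons] at hpr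
        rcases List.mem_cons.1 hpr with rfl | h2
        · have hy : y = c := hhead
          subst hy
          exact h'
        · exact hp _ h2

lemma pairs_lt [DecidableEq V] :
    ∀ (l : List V), l.Nodup → ∀ pr ∈ l.zip l.tail,
      l.idxOf pr.1 < l.idxOf pr.2 ∧ pr.1 ∈ l ∧ pr.2 ∈ l := by
  intro l
  induction l with
  | nil => simp
  | cons x m ih =>
    intro hnd pr hpr
    obtain ⟨hxm, hndm⟩ := List.nodup_cons.1 hnd
    cases m with
    | nil => simp at hpr
    | cons y t =>
      simp only [List.tail_cons, List.zip_cons_cons] at hpr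
      rcases List.mem_cons.1 hpr with rfl | h2
      · refine ⟨?_, by simp, by simp⟩
        show List.idxOf x (x :: y :: t) < List.idxOf y (x :: y :: t)
        rw [List.idxOf_cons_self]
        have hxy : y ≠ x := fun h => hxm (h ▸ List.mem_cons_self)
        rw [List.idxOf_cons_ne _ hxy.symm]
        exact Nat.succ_pos _
      · obtain ⟨h1, h2a, h2b⟩ := ih hndm pr h2
        have hne1 : pr.1 ≠ x := fun h => hxm (h ▸ h2a)
        have hne2 : pr.2 ≠ x := fun h => hxm (h ▸ h2b)
        refine ⟨?_, List.mem_cons_of_mem _ h2a, List.mem_cons_of_mem _ h2b⟩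
        rw [List.idxOf_cons_ne _ hne1.symm, List.idxOf_cons_ne _ hne2.symm]
        exact Nat.succ_lt_succ h1



section Mid
variable {A A' : Set (V × V)}

/-- Restriction of an acyclic reorientation is acyclic (free direction). -/
lemma reorient_restrict_subset (hsub : A' ⊆ A) (B : Set (V × V)) :
    reorient A' (B ∩ A') ⊆ reorient A B := by
  rintro z (⟨hz1, hz2⟩ | hz)
  · exact Or.inl ⟨hsub hz1, fun h => hz2 ⟨h, hz1⟩⟩
  · have := mem_swap_image.1 hz
    exact Or.inr (mem_swap_image.2 this.1)

lemma reorient_sub (hsub : A' ⊆ A) {B' : Set (V × V)} :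
    reorient A' B' ⊆ reorient A B' := by
  rintro z (⟨hz1, hz2⟩ | hz)
  · exact Or.inl ⟨hsub hz1, hz2⟩
  · exact Or.inr hz

lemma reorient_sub_R (hsub : A' ⊆ A) {B' : Set (V × V)} (hB' : B' ⊆ A') :
    reorient A B' ⊆ A ∪ Prod.swap '' A' := by
  rintro z (⟨hz1, _⟩ | hz)
  · exact Or.inl hz1
  · exact Or.inr (mem_swap_image.2 (hB' (mem_swap_image.1 hz)))

lemma reorient_diff_sub (hsub : A' ⊆ A) {B' : Set (V × V)} {z : V × V}
    (hz : z ∈ reorient A B') (hz' : z ∉ reorient A' B') : z ∈ A ∧ z ∉ A' := by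
  rcases hz with ⟨hz1, hz2⟩ | hz3
  · refine ⟨hz1, fun h => hz' (Or.inl ⟨h, hz2⟩)⟩
  · exact absurd (Or.inr hz3) hz'

/-- From a `Bad` configuration, contradict strong balance. -/
lemma no_bad (hA : IsDAG A) (hsub : A' ⊆ A) (hSB : StronglyBalanced A A') {z : V × V}
    (hzA : z ∈ A) (hzA' : z ∉ A')
    (hw : ReflTransGen (ArcRel (A ∪ Prod.swap '' A')) z.2 z.1) : False := by
  obtain ⟨l, hl, hnd, hhead, hlast, hp⟩ := path_extract hw
  have hcyc := cycleArcs_eq l hl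
  have hwrap : (l.getLast hl, l.head hl) = z := by
    rw [hhead, hlast]
  have harcs : ∀ a ∈ cycleArcs l, a ∈ A ∨ Prod.swap a ∈ A := by
    intro a ha
    rw [hcyc] at ha
    rcases List.mem_append.1 ha with h1 | h2
    · rcases hp a h1 with h | h
      · exact Or.inl h
      · exact Or.inr (hsub (mem_swap_image.1 h))
    · simp only [List.mem_singleton] at h2
      rw [h2, hwrap]
      exact Or.inl hzA
  have hback : ∀ a ∈ cycleArcs l, Prod.swap a ∈ A → Prod.swap a ∈ A' := by
    intro a ha hswA
    rw [hcyc] at ha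
    rcases List.mem_append.1 ha with h1 | h2
    · rcases hp a h1 with h | h
      · exact absurd hswA (hA.2.1 a h)
      · exact mem_swap_image.1 h
    · simp only [List.mem_singleton] at h2
      rw [h2, hwrap] at hswA ⊢
      exact absurd hswA (hA.2.1 z hzA)
  have hmem : z ∈ cycleArcs l := by
    rw [hcyc, ← hwrap]
    simp
  exact hzA' (hSB l ⟨hl, hnd, harcs⟩ hback z hmem hzA)

/-- Walk around a cycle: from an arc `(u,v)` of the cycle there is a walk `v → u`. -/
lemma cycle_walk {E : Set (V × V)} {p : List V} (hne : p ≠ [])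
    (harcs : ∀ a ∈ cycleArcs p, a ∈ E) {u v : V} (huv : (u, v) ∈ cycleArcs p) :
    ReflTransGen (ArcRel E) v u := by
  have hd := cycleArcs_eq p hne
  have hpairs : ∀ pr ∈ p.zip p.tail, pr ∈ E := fun pr hpr =>
    harcs pr (by rw [hd]; exact List.mem_append_left _ hpr)
  have hwrap : (p.getLast hne, p.head hne) ∈ E := harcs _ (by rw [hd]; simp)
  rw [hd] at huv
  rcases List.mem_append.1 huv with h1 | h2
  · have hu : u ∈ p := (List.of_mem_zip h1).1
    have hv : v ∈ p := List.mem_of_mem_tail (List.of_mem_zip h1).2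
    exact (reach_last p hpairs v hv hne).trans
      (ReflTransGen.head hwrap (reach_head p hpairs u hu hne))
  · simp only [List.mem_singleton, Prod.mk.injEq] at h2
    rw [h2.1, h2.2]
    exact reach_last p hpairs (p.head hne) (List.head_mem hne) hne

/-- Key lemma from strong balance: every acyclic reorientation of `A'` reorients `A`
acyclically. -/
lemma key_of_SB (hA : IsDAG A) (hsub : A' ⊆ A) (hSB : StronglyBalanced A A')
    {B' : Set (V × V)} (hB' : ARmem A' B') : AcyclicArcs (reorient A B') := by
  intro w hw
  rcases tg_split (reorient_sub hsub) hw with h1 | ⟨z, hz, hz2, hz3⟩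
  · exact hB'.2 w h1
  · obtain ⟨hzA, hzA'⟩ := reorient_diff_sub hsub hz hz2
    exact no_bad hA hsub hSB hzA hzA'
      (ReflTransGen.mono (r := ArcRel (reorient A B')) (fun _ _ hxy => reorient_sub_R hsub hB'.1 hxy) _ _ hz3)

/-- From a bad configuration, construct an acyclic reorientation of `A'` whose
extension to `A` is cyclic. -/
lemma construct_bad [Fintype V] (hA : IsDAG A) (hA' : IsDAG A') (hsub : A' ⊆ A) {z : V × V}
    (hzA : z ∈ A) (hzA' : z ∉ A')
    (hw : ReflTransGen (ArcRel (A ∪ Prod.swap '' A')) z.2 z.1) :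
    ∃ B', ARmem A' B' ∧ ¬ AcyclicArcs (reorient A B') := by
  classical
  obtain ⟨l, hl, hnd, hhead, hlast, hp⟩ := path_extract hw
  set lam' : V → ℕ := pc A' with hlam'
  set ℓ : V → ℕ := fun x => l.idxOf x with hℓ
  set B' : Set (V × V) := {b ∈ A' | ℓ b.2 < ℓ b.1} with hB'
  have hB'sub : B' ⊆ A' := fun b hb => hb.1
  -- acyclicity of `reorient A' B'` via a lexicographic potential
  have hacy' : AcyclicArcs (reorient A' B') := by
    intro v hv
    set ord : V → V → Prop :=
      fun x y => ℓ x < ℓ y ∨ (ℓ x = ℓ y ∧ lam' x < lam' y) with hord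
    have htrans : Transitive ord := by
      rintro x y zz (h | ⟨h1, h2⟩) (h' | ⟨h1', h2'⟩) <;>
        [left; left; left; right] <;> omega
    have hstep : ∀ x y, ArcRel (reorient A' B') x y → ord x y := by
      rintro x y (⟨hxy1, hxy2⟩ | hxy)
      · by_cases hl2 : ℓ x < ℓ y
        · exact Or.inl hl2
        · have : ¬ ℓ y < ℓ x := fun h => hxy2 ⟨hxy1, h⟩
          exact Or.inr ⟨by omega, pc_strict hA'.2.2 hxy1⟩
      · have h2 := mem_swap_image.1 hxy
        exact Or.inl h2.2
    have : ord v v := by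
      have := TransGen.mono hstep _ _ hv
      haveI hIT : IsTrans V ord := ⟨fun a b c h1 h2 => htrans h1 h2⟩
      rwa [transGen_eq_self] at this
    rcases this with h | ⟨_, h⟩ <;> omega
  -- the path stays in `reorient A B'`
  have hkeep : ∀ pr ∈ l.zip l.tail, pr ∈ reorient A B' := by
    intro pr hpr
    have hltp : ℓ pr.1 < ℓ pr.2 := (pairs_lt l hnd pr hpr).1
    rcases hp pr hpr with h1 | h2
    · refine Or.inl ⟨h1, fun hb => ?_⟩
      have := hb.2
      omega
    · have h2' : pr.swap ∈ A' := mem_swap_image.1 h2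
      refine Or.inr (mem_swap_image.2 ⟨h2', ?_⟩)
      show ℓ pr.swap.2 < ℓ pr.swap.1
      simpa using hltp
  have harc : z ∈ reorient A B' := Or.inl ⟨hzA, fun hb => hzA' hb.1⟩
  refine ⟨B', ⟨hB'sub, hacy'⟩, fun hacy => hacy z.2 ?_⟩
  have hwalk : ReflTransGen (ArcRel (reorient A B')) z.2 z.1 := by
    have := reach_last l hkeep (l.head hl) (List.head_mem hl) hl
    rwa [hhead, hlast] at this
  exact TransGen.tail' hwalk harc

end Mid
end Stmt7Aux


open Stmt7Aux Relation

/-- The restriction map restricts to a poset isomorphism from a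
lower interval of `AR(D)` onto `AR(D')` if and only if `A'` is strongly balanced
in `A`. -/
theorem stmt_7 {V : Type*} [Fintype V] (A A' : Set (V × V)) (hA : IsDAG A)
    (hA' : IsDAG A') (hsub : A' ⊆ A) :
    (∃ M, ARmem A M ∧
      (∀ B, ARmem A B → B ⊆ M → ARmem A' (B ∩ A')) ∧
      (∀ B', ARmem A' B' → ∃ B, ARmem A B ∧ B ⊆ M ∧ B ∩ A' = B') ∧
      (∀ B C, ARmem A B → B ⊆ M → ARmem A C → C ⊆ M →
        (B ⊆ C ↔ B ∩ A' ⊆ C ∩ A'))) ↔ StronglyBalanced A A' := by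
  classical
  have hARA'A' : ARmem A' A' := by
    refine ⟨subset_rfl, ?_⟩
    rw [reorient_self]
    exact acyclic_swap hA'.2.2
  constructor
  · rintro ⟨M, hM, h2, h3, h4⟩
    -- A' ⊆ M
    obtain ⟨T, hT, hTM, hTA'⟩ := h3 A' hARA'A'
    have hA'M : A' ⊆ M := fun x hx => hTM (by rw [← hTA'] at hx; exact hx.1)
    -- uniqueness within the interval
    have U : ∀ B C, ARmem A B → B ⊆ M → ARmem A C → C ⊆ M → B ∩ A' = C ∩ A' → B = C :=
      fun B C hB hBM hC hCM he =>
        subset_antisymm ((h4 B C hB hBM hC hCM).2 he.le) ((h4 C B hC hCM hB hBM).2 he.ge)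
    -- key lemma
    have key : ∀ n (B' : Set (V × V)), B'.ncard = n → ARmem A' B' →
        AcyclicArcs (reorient A B') := by
      intro n
      induction n using Nat.strong_induction_on with
      | _ n ih =>
        intro B' hcard hB'
        rcases Set.eq_empty_or_nonempty B' with rfl | hne0
        · rw [reorient_empty]; exact hA.2.2
        · have hne : (∅ : Set (V × V)) ≠ B' := fun h => hne0.ne_empty h.symm
          obtain ⟨a', ha'S, ha'acy⟩ := penultimate hA'.2.1 (Set.empty_subset B') hB'.1
            (by rw [reorient_empty]; exact hA'.2.2) hB'.2 hne
          have ha'B' : a' ∈ B' := ha'S.1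
          set C' := B' \ {a'} with hC'def
          have hC'AR' : ARmem A' C' := ⟨Set.diff_subset.trans hB'.1, ha'acy⟩
          have hlt : C'.ncard < n :=
            hcard ▸ Set.ncard_diff_singleton_lt_of_mem ha'B' (Set.toFinite _)
          have hCA : AcyclicArcs (reorient A C') := ih _ hlt C' rfl hC'AR'
          by_contra hcyc
          obtain ⟨D, hD, hDM, hDA'⟩ := h3 B' hB'
          have hB'D : B' ⊆ D := fun x hx => by
            rw [← hDA'] at hx; exact hx.1
          have hC'D : C' ⊆ D := Set.diff_subset.trans hB'D
          have hCne : C' ≠ D := by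
            intro h
            have : a' ∈ C' := h ▸ hB'D ha'B'
            exact this.2 rfl
          obtain ⟨a, haS, haacy⟩ := penultimate hA.2.1 hC'D hD.1 hCA hD.2 hCne
          have hC'M : C' ⊆ M := (Set.diff_subset.trans hB'.1).trans hA'M
          have hC'AR : ARmem A C' := ⟨hC'AR'.1.trans hsub, hCA⟩
          have hDint : D ∩ A' = B' := hDA'
          by_cases haa : a = a'
          · subst haa
            have h1 : ARmem A (D \ {a}) := ⟨Set.diff_subset.trans hD.1, haacy⟩
            have h2' : (D \ {a}) ∩ A' = C' := by
              rw [hC'def, ← hDint]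
              ext zz
              simp only [Set.mem_inter_iff, Set.mem_diff, Set.mem_singleton_iff]
              tauto
            have hDeq : D \ {a} = C' := by
              apply U _ _ h1 (Set.diff_subset.trans hDM) hC'AR hC'M
              rw [h2', Set.inter_eq_left.2 hC'AR'.1]
            have hDB : D = B' := by
              have haD : a ∈ D := hB'D ha'B'
              ext zz
              constructor
              · intro hz
                by_cases hza : zz = a
                · rw [hza]; exact ha'B'
                · have : zz ∈ C' := hDeq ▸ (⟨hz, hza⟩ : zz ∈ D \ {a})
                  exact this.1
              · intro hz
                exact hB'D hz
            exact hcyc (hDB ▸ hD.2)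
          · have haB' : a ∉ B' := fun h => haS.2 ⟨h, haa⟩
            have haA' : a ∉ A' := fun h => haB' (by rw [← hDint]; exact ⟨haS.1, h⟩)
            have h2' : (D \ {a}) ∩ A' = D ∩ A' := by
              ext zz
              simp only [Set.mem_inter_iff, Set.mem_diff, Set.mem_singleton_iff]
              constructor
              · rintro ⟨⟨h1, _⟩, h3⟩; exact ⟨h1, h3⟩
              · rintro ⟨h1, h3⟩
                exact ⟨⟨h1, fun hq => haA' (hq ▸ h3)⟩, h3⟩
            have hDeq : D \ {a} = D :=
              U _ _ ⟨Set.diff_subset.trans hD.1, haacy⟩ (Set.diff_subset.trans hDM) hD hDM h2'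
            have : a ∈ D \ {a} := hDeq.symm ▸ haS.1
            exact this.2 rfl
    -- now prove strong balance
    intro p hU hback f hf hfA
    by_contra hfA'
    have harcs : ∀ a ∈ cycleArcs p, a ∈ A ∪ Prod.swap '' A' := by
      intro a ha
      rcases hU.2.2 a ha with h | h
      · exact Or.inl h
      · exact Or.inr (mem_swap_image.2 (hback a ha h))
    have hw : ReflTransGen (ArcRel (A ∪ Prod.swap '' A')) f.2 f.1 := by
      have := cycle_walk (E := A ∪ Prod.swap '' A') hU.1 harcs (u := f.1) (v := f.2)
        (by simpa using hf)
      exact this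
    obtain ⟨B', hB', hncy⟩ := construct_bad hA hA' hsub hfA hfA' hw
    exact hncy (key _ B' rfl hB')
  · intro hSB
    refine ⟨A', ⟨hsub, key_of_SB hA hsub hSB hARA'A'⟩, ?_, ?_, ?_⟩
    · intro B hB _
      exact ⟨Set.inter_subset_right, acyclic_mono (reorient_restrict_subset hsub B) hB.2⟩
    · intro B' hB'
      exact ⟨B', ⟨hB'.1.trans hsub, key_of_SB hA hsub hSB hB'⟩, hB'.1,
        Set.inter_eq_left.2 hB'.1⟩
    · intro B C hB hBM hC hCM
      rw [Set.inter_eq_left.2 hBM, Set.inter_eq_left.2 hCM]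
end

section
/- Let D = (V, A) be a directed acyclic graph and B ∈ AR(D). Then B is join irreducible in AR(D) (it covers exactly one element of AR(D)) if and only if exactly one arc (u,v) ∈ B is such that the reversed arc (v,u) belongs to the transitive reduction of the reoriented graph E_B. Dually, B is meet irreducible in AR(D) if and only if exactly one arc of A ∖ B belongs to the transitive reduction of E_B. -/
section Aux
open Relation

variable {V : Type*}

lemma mem_reorient {A B : Set (V × V)} {p : V × V} :
    p ∈ reorient A B ↔ (p ∈ A ∧ p ∉ B) ∨ p.swap ∈ B := by
  unfold reorient
  constructor
  · rintro (h | ⟨b, hb, rfl⟩)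
    · exact Or.inl h
    · exact Or.inr (by simpa using hb)
  · rintro (h | h)
    · exact Or.inl h
    · exact Or.inr ⟨p.swap, h, Prod.swap_swap p⟩

lemma acyclic_mono {E F : Set (V × V)} (h : E ⊆ F) (hF : AcyclicArcs F) : AcyclicArcs E :=
  fun v hv => hF v (TransGen.mono (fun _ _ hxy => h hxy) _ _ hv)

lemma acyclic_ne {E : Set (V × V)} (hE : AcyclicArcs E) {x y : V} (h : (x,y) ∈ E) : x ≠ y := by
  rintro rfl; exact hE x (Relation.TransGen.single h)

lemma transGen_ne {E : Set (V × V)} (hE : AcyclicArcs E) {x y : V}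
    (h : Relation.TransGen (ArcRel E) x y) : x ≠ y := by
  rintro rfl; exact hE x h

/-- Decomposition of a path in the flipped graph. -/
lemma flip_decomp {E : Set (V × V)} {x y s t : V}
    (h : TransGen (ArcRel (insert (y,x) (E \ {(x,y)}))) s t) :
    TransGen (ArcRel (E \ {(x,y)})) s t ∨
      (ReflTransGen (ArcRel (E \ {(x,y)})) s y ∧ ReflTransGen (ArcRel (E \ {(x,y)})) x t) := by
  induction h using Relation.TransGen.head_induction_on with
  | @single a h =>
    rcases Set.mem_insert_iff.1 h with h | h
    · rw [Prod.ext_iff] at h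
      obtain ⟨rfl, rfl⟩ := h
      exact Or.inr ⟨ReflTransGen.refl, ReflTransGen.refl⟩
    · exact Or.inl (TransGen.single h)
  | @head a c h' htrans ih =>
    rcases Set.mem_insert_iff.1 h' with h' | h'
    · rw [Prod.ext_iff] at h'
      obtain ⟨rfl, rfl⟩ := h'
      refine Or.inr ⟨ReflTransGen.refl, ?_⟩
      rcases ih with ih | ⟨_, ih2⟩
      · exact ih.to_reflTransGen
      · exact ih2
    · rcases ih with ih | ⟨ih1, ih2⟩
      · exact Or.inl (ih.head h')
      · exact Or.inr ⟨ih1.head h', ih2⟩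

/-- If there is a path in `E`, there is one avoiding arc `(x,y)` or we reach `x`. -/
lemma avoid_decomp {E : Set (V × V)} {x y s t : V}
    (h : TransGen (ArcRel E) s t) :
    TransGen (ArcRel (E \ {(x,y)})) s t ∨ ReflTransGen (ArcRel E) s x := by
  induction h using Relation.TransGen.head_induction_on with
  | @single a h =>
    by_cases he : (a, t) = (x, y)
    · rw [Prod.ext_iff] at he
      obtain ⟨rfl, rfl⟩ := he
      exact Or.inr ReflTransGen.refl
    · exact Or.inl (TransGen.single ⟨h, he⟩)
  | @head a c h' htrans ih =>
    by_cases he : (a, c) = (x, y)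
    · rw [Prod.ext_iff] at he
      obtain ⟨rfl, rfl⟩ := he
      exact Or.inr ReflTransGen.refl
    · rcases ih with ih | ih
      · exact Or.inl (ih.head ⟨h', he⟩)
      · exact Or.inr (ih.head h')

/-- Flipping the arc `(x,y)` preserves acyclicity iff `(x,y)` is in the transitive
reduction. -/
lemma acyclic_flip {E : Set (V × V)} (hE : AcyclicArcs E) {x y : V} (hxy : (x,y) ∈ E) :
    AcyclicArcs (insert (y,x) (E \ {(x,y)})) ↔ (x,y) ∈ transRed E := by
  constructor
  · intro hE' 
    refine ⟨hxy, ?_⟩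
    rintro ⟨w, hw1, hw2⟩
    have hwy : w ≠ y := by
      rintro rfl; exact hE _ hw2
    -- build a cycle in the flipped graph
    rcases avoid_decomp (x := x) (y := y) hw2 with h | h
    · -- path from w to y avoiding (x,y); then x → w → y → x is a cycle
      have hxw : ArcRel (insert (y,x) (E \ {(x,y)})) x w :=
        Or.inr ⟨hw1, by simp [Prod.ext_iff, hwy]⟩
      have hyx : ArcRel (insert (y,x) (E \ {(x,y)})) y x := Or.inl rfl
      have hpath : TransGen (ArcRel (insert (y,x) (E \ {(x,y)}))) w y :=
        TransGen.mono (fun a b hab => Or.inr hab) _ _ h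
      exact hE' x ((hpath.head hxw).tail hyx)
    · -- w reaches x in E, but (x,w) ∈ E : cycle in E
      exact hE x (TransGen.head' hw1 h)
  · rintro ⟨-, hred⟩ v hv
    rcases flip_decomp hv with h | ⟨h1, h2⟩
    · exact hE v (TransGen.mono (fun a b hab => hab.1) _ _ h)
    · have hxy' : ReflTransGen (ArcRel (E \ {(x,y)})) x y := h2.trans h1
      rcases hxy'.cases_head with h | ⟨c, hc1, hc2⟩
      · exact acyclic_ne hE hxy h
      · have hcy : c ≠ y := by
          rintro rfl; exact hc1.2 rfl
        refine hred ⟨c, hc1.1, ?_⟩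
        have : TransGen (ArcRel (E \ {(x,y)})) c y :=
          (Relation.reflTransGen_iff_eq_or_transGen.1 hc2).resolve_left (Ne.symm hcy)
        exact TransGen.mono (fun a b hab => hab.1) _ _ this

lemma swap_ne_self {a : V × V} (h : a.1 ≠ a.2) : a.swap ≠ a := by
  intro he
  exact h (congrArg Prod.snd he)

lemma reorient_sdiff {A B : Set (V × V)} (hA : IsDAG A) (hB : B ⊆ A) {a : V × V}
    (ha : a ∈ B) :
    reorient A (B \ {a}) = insert a (reorient A B \ {a.swap}) := by
  have haA : a ∈ A := hB ha
  have hsw : a.swap ∉ A := hA.2.1 a haA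
  have hne : a.swap ≠ a := swap_ne_self (hA.1 a haA)
  ext p
  simp only [mem_reorient, Set.mem_insert_iff, Set.mem_diff, Set.mem_singleton_iff]
  by_cases hpa : p = a
  · subst hpa
    simp [haA, ha, Ne.symm hne]
  · by_cases hps : p = a.swap
    · subst hps
      have h2 : a.swap.swap = a := Prod.swap_swap a
      simp [hsw, h2, ha, hne, hpa]
    · have h1 : p.swap ≠ a := fun h => hps (by rw [← h, Prod.swap_swap])
      simp only [hpa, hps, h1]
      tauto

lemma reorient_insert {A B : Set (V × V)} (hA : IsDAG A) (hB : B ⊆ A) {a : V × V}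
    (haA : a ∈ A) (ha : a ∉ B) :
    reorient A (insert a B) = insert a.swap (reorient A B \ {a}) := by
  have hsw : a.swap ∉ A := hA.2.1 a haA
  have hne : a.swap ≠ a := swap_ne_self (hA.1 a haA)
  have haB : a.swap ∉ B := fun h => hsw (hB h)
  ext p
  simp only [mem_reorient, Set.mem_insert_iff, Set.mem_diff, Set.mem_singleton_iff]
  by_cases hpa : p = a
  · subst hpa
    have h2 : p.swap.swap = p := Prod.swap_swap p
    simp [haA, ha, hne, Ne.symm hne, haB, h2]
  · by_cases hps : p = a.swap
    · subst hps
      have h2 : a.swap.swap = a := Prod.swap_swap a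
      simp [hsw, h2, ha, hpa]
    · have h1 : p.swap ≠ a := fun h => hps (by rw [← h, Prod.swap_swap])
      simp only [hpa, hps, h1]
      tauto

lemma ARmem_sdiff_iff {A B : Set (V × V)} (hA : IsDAG A) (hB : ARmem A B) {a : V × V}
    (ha : a ∈ B) :
    ARmem A (B \ {a}) ↔ a.swap ∈ transRed (reorient A B) := by
  obtain ⟨u, v⟩ := a
  have hsub : B \ {(u,v)} ⊆ A := fun p hp => hB.1 hp.1
  have hswE : (v,u) ∈ reorient A B := mem_reorient.2 (Or.inr (by simpa using ha))
  have hre : reorient A (B \ {(u,v)}) = insert (u,v) (reorient A B \ {(v,u)}) := by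
    simpa using reorient_sdiff hA hB.1 ha
  have hflip := acyclic_flip (x := v) (y := u) hB.2 hswE
  constructor
  · intro h
    exact hflip.1 (hre ▸ h.2)
  · intro h
    exact ⟨hsub, hre ▸ hflip.2 h⟩

lemma ARmem_insert_iff {A B : Set (V × V)} (hA : IsDAG A) (hB : ARmem A B) {a : V × V}
    (haA : a ∈ A) (ha : a ∉ B) :
    ARmem A (insert a B) ↔ a ∈ transRed (reorient A B) := by
  obtain ⟨u, v⟩ := a
  have hsub : insert (u,v) B ⊆ A := Set.insert_subset haA hB.1
  have hE : (u,v) ∈ reorient A B := mem_reorient.2 (Or.inl ⟨haA, ha⟩)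
  have hre : reorient A (insert (u,v) B) = insert (v,u) (reorient A B \ {(u,v)}) := by
    simpa using reorient_insert hA hB.1 haA ha
  have hflip := acyclic_flip (x := u) (y := v) hB.2 hE
  constructor
  · intro h
    exact hflip.1 (hre ▸ h.2)
  · intro h
    exact ⟨hsub, hre ▸ hflip.2 h⟩

lemma arc_cases {A B C : Set (V × V)} (hCB : C ⊆ B) {p : V × V}
    (hp : p ∈ reorient A C) :
    p ∈ reorient A B ∨ (p ∈ B ∧ p ∉ C) := by
  rcases mem_reorient.1 hp with ⟨hpA, hpC⟩ | hps
  · by_cases hpB : p ∈ B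
    · exact Or.inr ⟨hpB, hpC⟩
    · exact Or.inl (mem_reorient.2 (Or.inl ⟨hpA, hpB⟩))
  · exact Or.inl (mem_reorient.2 (Or.inr (hCB hps)))

/-- Extracting the last `B \ C` arc of a path in `E_C`. -/
lemma diamond_decomp {A B C : Set (V × V)} (hCB : C ⊆ B) {s t : V}
    (h : TransGen (ArcRel (reorient A C)) s t) :
    TransGen (ArcRel (reorient A B)) s t ∨
      ∃ w z : V, ReflTransGen (ArcRel (reorient A C)) s w ∧
        ((w,z) ∈ B ∧ (w,z) ∉ C) ∧ ReflTransGen (ArcRel (reorient A B)) z t := by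
  induction h using Relation.TransGen.head_induction_on with
  | @single a h =>
    rcases arc_cases hCB h with h | h
    · exact Or.inl (TransGen.single h)
    · exact Or.inr ⟨a, t, ReflTransGen.refl, h, ReflTransGen.refl⟩
  | @head a c h' htrans ih =>
    rcases ih with ih | ⟨w, z, p1, p2, p3⟩
    · rcases arc_cases hCB h' with h | h
      · exact Or.inl (ih.head h)
      · exact Or.inr ⟨a, c, ReflTransGen.refl, h, ih.to_reflTransGen⟩
    · exact Or.inr ⟨w, z, p1.head h', p2, p3⟩

/-- One can always add a single arc between two nested acyclic reorientations. -/
lemma diamond {A : Set (V × V)} [Fintype V] (hA : IsDAG A) {C B : Set (V × V)}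
    (hC : ARmem A C) (hB : ARmem A B) (hsub : C ⊆ B) (hne : C ≠ B) :
    ∃ a : V × V, (a ∈ B ∧ a ∉ C) ∧ ARmem A (insert a C) := by
  classical
  -- well-foundedness of reachability
  have hwfB : WellFounded (Relation.TransGen (ArcRel (reorient A B))) := by
    haveI : IsTrans V (Relation.TransGen (ArcRel (reorient A B))) :=
      ⟨fun _ _ _ h1 h2 => h1.trans h2⟩
    haveI : IsIrrefl V (Relation.TransGen (ArcRel (reorient A B))) :=
      ⟨fun v h => hB.2 v h⟩
    exact Finite.wellFounded_of_trans_of_irrefl _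
  have hwfC : WellFounded (fun x y => Relation.TransGen (ArcRel (reorient A C)) y x) := by
    haveI : IsTrans V (fun x y => Relation.TransGen (ArcRel (reorient A C)) y x) :=
      ⟨fun _ _ _ h1 h2 => h2.trans h1⟩
    haveI : IsIrrefl V (fun x y => Relation.TransGen (ArcRel (reorient A C)) y x) :=
      ⟨fun v h => hC.2 v h⟩
    exact Finite.wellFounded_of_trans_of_irrefl _
  -- pick v₀ minimal among heads of B \ C arcs
  obtain ⟨p0, hp0B, hp0C⟩ : ∃ p, p ∈ B ∧ p ∉ C := by
    by_contra h
    push_neg at h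
    exact hne (Set.Subset.antisymm hsub (fun p hp => h p hp))
  have hSne : {v : V | ∃ u, (u, v) ∈ B ∧ (u, v) ∉ C}.Nonempty := ⟨p0.2, p0.1, by simpa using ⟨hp0B, hp0C⟩⟩
  obtain ⟨v₀, ⟨u', hv₀⟩, hv₀min⟩ := hwfB.has_min _ hSne
  -- pick u₀ maximal (in E_C order) among tails of B \ C arcs with head v₀
  have hHne : {u : V | (u, v₀) ∈ B ∧ (u, v₀) ∉ C}.Nonempty := ⟨u', hv₀⟩
  obtain ⟨u₀, hu₀, hu₀max⟩ := hwfC.has_min _ hHne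
  refine ⟨(u₀, v₀), hu₀, ?_⟩
  have haA : (u₀, v₀) ∈ A := hB.1 hu₀.1
  rw [ARmem_insert_iff hA hC haA hu₀.2]
  refine ⟨mem_reorient.2 (Or.inl ⟨haA, hu₀.2⟩), ?_⟩
  rintro ⟨w', hw1, hw2⟩
  -- hw1 : (u₀, w') ∈ E_C, hw2 : w' →⁺ v₀ in E_C
  rcases diamond_decomp hsub hw2 with h | ⟨w, z, p1, p2, p3⟩
  · -- all arcs in E_B
    rcases arc_cases hsub hw1 with h1 | h1
    · -- (u₀,w') ∈ E_B : cycle in E_B through (v₀,u₀)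
      have hvu : ArcRel (reorient A B) v₀ u₀ := mem_reorient.2 (Or.inr (by simpa using hu₀.1))
      have h1' : ArcRel (reorient A B) u₀ w' := h1
      have h' : TransGen (ArcRel (reorient A B)) w' v₀ := h
      exact hB.2 v₀ (TransGen.head hvu (TransGen.head h1' h'))
    · -- (u₀,w') ∈ B \ C : w' is a head reaching v₀ in E_B
      have : w' = v₀ := by
        by_contra hne'
        exact hv₀min w' ⟨u₀, h1⟩ h
      subst this
      exact hC.2 w' hw2
  · -- last B∖C arc (w,z) : by minimality z = v₀ and maximality contradiction
    have hz : z = v₀ := by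
      rcases Relation.reflTransGen_iff_eq_or_transGen.1 p3 with h | h
      · exact h.symm
      · exact absurd h (hv₀min z ⟨w, p2⟩)
    subst hz
    exact hu₀max w p2 (TransGen.head' hw1 p1)

lemma ARP_lt_iff {A : Set (V × V)} {C B : ARP A} : C < B ↔ C.1 ⊂ B.1 := by
  rw [← Subtype.coe_lt_coe]

lemma ARP_le_iff {A : Set (V × V)} {C B : ARP A} : C ≤ B ↔ C.1 ⊆ B.1 := Iff.rfl

lemma covBy_down_iff {A : Set (V × V)} [Fintype V] (hA : IsDAG A) {C B : ARP A} :
    C ⋖ B ↔ ∃ a ∈ B.1, C.1 = B.1 \ {a} := by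
  constructor
  · intro h
    have hlt := ARP_lt_iff.1 h.1
    obtain ⟨a, ⟨haB, haC⟩, hmem⟩ := diamond hA C.2 B.2 hlt.1 (fun he => hlt.2 (he ▸ le_rfl))
    have hC' : ARmem A (insert a C.1) := hmem
    set C' : ARP A := ⟨insert a C.1, hC'⟩ with hC'def
    have h1 : C < C' := ARP_lt_iff.2 (Set.ssubset_insert haC)
    have h2 : C' ≤ B := ARP_le_iff.2 (Set.insert_subset haB hlt.1)
    have h3 : C' = B := by
      by_contra hne
      exact h.2 h1 (lt_of_le_of_ne h2 hne)
    refine ⟨a, haB, ?_⟩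
    rw [← h3]
    exact (Set.insert_diff_self_of_notMem haC).symm
  · rintro ⟨a, haB, hC⟩
    have haC : a ∉ C.1 := by rw [hC]; simp
    constructor
    · refine ARP_lt_iff.2 ⟨by rw [hC]; exact Set.diff_subset, fun hsub => haC (hsub haB)⟩
    · intro z h1 h2
      have hz1 := ARP_lt_iff.1 h1
      have hz2 := ARP_lt_iff.1 h2
      obtain ⟨b, hbz, hbC⟩ := Set.exists_of_ssubset hz1
      have hba : b = a := by
        by_contra hba
        exact hbC (hC ▸ ⟨hz2.1 hbz, by simp [hba]⟩)
      subst hba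
      apply hz2.2
      intro p hp
      by_cases hpb : p = b
      · exact hpb ▸ hbz
      · exact hz1.1 (hC ▸ ⟨hp, hpb⟩)

lemma covBy_up_iff {A : Set (V × V)} [Fintype V] (hA : IsDAG A) {B C : ARP A} :
    B ⋖ C ↔ ∃ a, (a ∈ A ∧ a ∉ B.1) ∧ C.1 = insert a B.1 := by
  constructor
  · intro h
    have hlt := ARP_lt_iff.1 h.1
    obtain ⟨a, ⟨haC, haB⟩, hmem⟩ := diamond hA B.2 C.2 hlt.1 (fun he => hlt.2 (he ▸ le_rfl))
    set B' : ARP A := ⟨insert a B.1, hmem⟩ with hB'def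
    have h1 : B < B' := ARP_lt_iff.2 (Set.ssubset_insert haB)
    have h2 : B' ≤ C := ARP_le_iff.2 (Set.insert_subset haC hlt.1)
    have h3 : B' = C := by
      by_contra hne
      exact h.2 h1 (lt_of_le_of_ne h2 hne)
    exact ⟨a, ⟨C.2.1 haC, haB⟩, by rw [← h3]⟩
  · rintro ⟨a, ⟨haA, haB⟩, hC⟩
    constructor
    · exact ARP_lt_iff.2 (hC ▸ Set.ssubset_insert haB)
    · intro z h1 h2
      have hz1 := ARP_lt_iff.1 h1
      have hz2 := ARP_lt_iff.1 h2
      obtain ⟨b, hbz, hbB⟩ := Set.exists_of_ssubset hz1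
      have hba : b = a := by
        have := hz2.1 hbz
        rw [hC] at this
        rcases this with h | h
        · exact h
        · exact absurd h hbB
      subst hba
      apply hz2.2
      rw [hC]
      exact Set.insert_subset hbz hz1.1

private theorem stmt_9' {V : Type*} [Fintype V] (A : Set (V × V)) (hA : IsDAG A)
    (B : ARP A) :
    ((∃! C : ARP A, C ⋖ B) ↔
      (∃! a : V × V, a ∈ B.1 ∧ Prod.swap a ∈ transRed (reorient A B.1))) ∧
    ((∃! C : ARP A, B ⋖ C) ↔
      (∃! a : V × V, a ∈ A \ B.1 ∧ a ∈ transRed (reorient A B.1))) := by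
  have key1 : ∀ a : V × V, a ∈ B.1 →
      (ARmem A (B.1 \ {a}) ↔ a.swap ∈ transRed (reorient A B.1)) :=
    fun a ha => ARmem_sdiff_iff hA B.2 ha
  have key2 : ∀ a : V × V, a ∈ A → a ∉ B.1 →
      (ARmem A (insert a B.1) ↔ a ∈ transRed (reorient A B.1)) :=
    fun a haA ha => ARmem_insert_iff hA B.2 haA ha
  constructor
  · constructor
    · rintro ⟨C₀, hC₀, huniq⟩
      obtain ⟨a₀, ha₀B, hC₀a⟩ := (covBy_down_iff hA).1 hC₀
      refine ⟨a₀, ⟨ha₀B, (key1 a₀ ha₀B).1 (hC₀a ▸ C₀.2)⟩, ?_⟩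
      rintro a ⟨haB, htr⟩
      have hmem : ARmem A (B.1 \ {a}) := (key1 a haB).2 htr
      have hcov : (⟨B.1 \ {a}, hmem⟩ : ARP A) ⋖ B :=
        (covBy_down_iff hA).2 ⟨a, haB, rfl⟩
      have heq := huniq _ hcov
      have hset : B.1 \ {a} = B.1 \ {a₀} := by
        have := congrArg Subtype.val heq
        simpa [hC₀a] using this
      by_contra hne
      have : a ∈ B.1 \ {a} := hset ▸ (⟨haB, by simpa using hne⟩ : a ∈ B.1 \ {a₀})
      exact this.2 rfl
    · rintro ⟨a₀, ⟨ha₀B, htr⟩, huniq⟩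
      have hmem : ARmem A (B.1 \ {a₀}) := (key1 a₀ ha₀B).2 htr
      refine ⟨⟨B.1 \ {a₀}, hmem⟩, (covBy_down_iff hA).2 ⟨a₀, ha₀B, rfl⟩, ?_⟩
      rintro C hC
      obtain ⟨a, haB, hCa⟩ := (covBy_down_iff hA).1 hC
      have htra : a.swap ∈ transRed (reorient A B.1) := (key1 a haB).1 (hCa ▸ C.2)
      have : a = a₀ := huniq a ⟨haB, htra⟩
      exact Subtype.ext (by rw [hCa, this])
  · constructor
    · rintro ⟨C₀, hC₀, huniq⟩
      obtain ⟨a₀, ⟨ha₀A, ha₀B⟩, hC₀a⟩ := (covBy_up_iff hA).1 hC₀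
      refine ⟨a₀, ⟨⟨ha₀A, ha₀B⟩, (key2 a₀ ha₀A ha₀B).1 (hC₀a ▸ C₀.2)⟩, ?_⟩
      rintro a ⟨⟨haA, haB⟩, htr⟩
      have hmem : ARmem A (insert a B.1) := (key2 a haA haB).2 htr
      have hcov : B ⋖ (⟨insert a B.1, hmem⟩ : ARP A) :=
        (covBy_up_iff hA).2 ⟨a, ⟨haA, haB⟩, rfl⟩
      have heq := huniq _ hcov
      have hset : insert a B.1 = insert a₀ B.1 := by
        have := congrArg Subtype.val heq
        simpa [hC₀a] using this
      have : a ∈ insert a₀ B.1 := hset ▸ Set.mem_insert a B.1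
      rcases this with h | h
      · exact h
      · exact absurd h haB
    · rintro ⟨a₀, ⟨⟨ha₀A, ha₀B⟩, htr⟩, huniq⟩
      have hmem : ARmem A (insert a₀ B.1) := (key2 a₀ ha₀A ha₀B).2 htr
      refine ⟨⟨insert a₀ B.1, hmem⟩, (covBy_up_iff hA).2 ⟨a₀, ⟨ha₀A, ha₀B⟩, rfl⟩, ?_⟩
      rintro C hC
      obtain ⟨a, ⟨haA, haB⟩, hCa⟩ := (covBy_up_iff hA).1 hC
      have htra : a ∈ transRed (reorient A B.1) := (key2 a haA haB).1 (hCa ▸ C.2)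
      have : a = a₀ := huniq a ⟨⟨haA, haB⟩, htra⟩
      exact Subtype.ext (by rw [hCa, this])

end Aux

/-- `B` is join (resp. meet) irreducible in `AR(D)` iff exactly
one reversed (resp. unreversed) arc appears in the transitive reduction of `E_B`. -/
theorem stmt_9 {V : Type*} [Fintype V] (A : Set (V × V)) (hA : IsDAG A)
    (B : ARP A) :
    ((∃! C : ARP A, C ⋖ B) ↔
      (∃! a : V × V, a ∈ B.1 ∧ Prod.swap a ∈ transRed (reorient A B.1))) ∧
    ((∃! C : ARP A, B ⋖ C) ↔
      (∃! a : V × V, a ∈ A \ B.1 ∧ a ∈ transRed (reorient A B.1))) := by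
  exact stmt_9' A hA B
end
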